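/- arXiv:1504.01007 — 8 statements merged into one kernel-verified Lean document; each statement's English description precedes it below -/
import Mathlib

section
/- A polynomial f in k variables over a field K of total degree at most n is uniquely determined by its values on the combinatorial simplex {(a_{1,t_1}, ..., a_{k,t_k}) : t_1 + ... + t_k ≤ n}, where for each i, A_i = {a_{i,0}, a_{i,1}, ..., a_{i,n}} is a set of n+1 distinct elements of K. That is, if two polynomials of degree at most n agree on all such points, they are equal. -/
open MvPolynomial

private lemma fdeg_add {σ : Type*} (a b : σ →₀ ℕ) :
    Finsupp.degree (a + b) = Finsupp.degree a + Finsupp.degree b := by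
  simp [Finsupp.degree_eq_weight_one, map_add]

private lemma hcA {σ R : Type*} [CommSemiring R] (p : MvPolynomial σ R) (hp : p ≠ 0) :
    homogeneousComponent p.totalDegree p ≠ 0 := by
  have hsup : p.support.Nonempty := by
    rwa [Finset.nonempty_iff_ne_empty, ne_eq, support_eq_empty]
  obtain ⟨m, hm, hm2⟩ := Finset.exists_mem_eq_sup p.support hsup
    (fun s => Finsupp.sum s fun _ e => e)
  intro h0
  have : coeff m (homogeneousComponent p.totalDegree p) = coeff m p := by
    rw [coeff_homogeneousComponent, if_pos]
    rw [totalDegree, hm2]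
    rfl
  rw [h0, coeff_zero] at this
  exact mem_support_iff.mp hm this.symm

private lemma hcB {σ R : Type*} [CommSemiring R] (j : σ) (d : ℕ) (p : MvPolynomial σ R) :
    homogeneousComponent (d + 1) (X j * p) = X j * homogeneousComponent d p := by
  classical
  induction p using MvPolynomial.induction_on' with
  | monomial s r =>
    have hx : (X j : MvPolynomial σ R) * monomial s r
        = monomial (Finsupp.single j 1 + s) r := by
      rw [X, monomial_mul, one_mul]
    have hmon : ∀ (n : ℕ) (s : σ →₀ ℕ) (r : R),
        homogeneousComponent n (monomial s r)
          = if Finsupp.degree s = n then monomial s r else 0 := by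
      intro n s r
      ext m
      rw [coeff_homogeneousComponent]
      by_cases h1 : Finsupp.degree s = n
      · rw [if_pos h1]
        by_cases h2 : Finsupp.degree m = n
        · rw [if_pos h2]
        · rw [if_neg h2, coeff_monomial, if_neg]
          rintro rfl; exact h2 h1
      · rw [if_neg h1]
        by_cases h2 : Finsupp.degree m = n
        · rw [if_pos h2, coeff_zero, coeff_monomial, if_neg]
          rintro rfl; exact h1 h2
        · rw [if_neg h2, coeff_zero]
    have hdeg : Finsupp.degree (Finsupp.single j 1 + s) = Finsupp.degree s + 1 := by
      rw [fdeg_add]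
      have : Finsupp.degree (Finsupp.single j 1) = 1 := by
        rw [Finsupp.degree_apply, Finsupp.support_single_ne_zero _ one_ne_zero,
          Finset.sum_singleton, Finsupp.single_eq_same]
      rw [this]; ring
    rw [hx, hmon, hmon, hdeg]
    by_cases h1 : Finsupp.degree s = d
    · rw [if_pos (by omega), if_pos h1, hx]
    · rw [if_neg (by omega), if_neg h1, mul_zero]
  | add p q hp hq =>
    rw [mul_add, map_add, map_add, hp, hq, mul_add]

private lemma deg_factor {σ R : Type*} [CommRing R] [IsDomain R] (j : σ) (c : R)
    (h' : MvPolynomial σ R) {N : ℕ}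
    (hd : ((X j - C c) * h').totalDegree ≤ N + 1) : h'.totalDegree ≤ N := by
  by_contra hlt
  push_neg at hlt
  have hne : h' ≠ 0 := by
    rintro rfl
    simp [totalDegree_zero] at hlt
  set d := h'.totalDegree with hdd
  have e1 : homogeneousComponent (d + 1) ((X j - C c) * h') = 0 :=
    homogeneousComponent_eq_zero _ _ (by omega)
  have e2 : (X j - C c) * h' = X j * h' - C c * h' := by ring
  have e3 : homogeneousComponent (d + 1) h' = 0 :=
    homogeneousComponent_eq_zero _ _ (by omega)
  rw [e2, map_sub, hcB, homogeneousComponent_C_mul, e3, mul_zero, sub_zero] at e1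
  rcases mul_eq_zero.mp e1 with h | h
  · exact X_ne_zero j h
  · exact hcA h' hne h

private lemma aux_vanish {K : Type*} [Field K] (n : ℕ) :
    ∀ (k : ℕ) (a : Fin k → Fin (n + 1) → K), (∀ i, Function.Injective (a i)) →
    ∀ h : MvPolynomial (Fin k) K, h.totalDegree ≤ n →
    (∀ t : Fin k → Fin (n + 1), (∑ i, (t i : ℕ)) ≤ n →
      eval (fun i => a i (t i)) h = 0) → h = 0 := by
  induction n with
  | zero =>
    intro k a ha h hdeg hv
    have hC : h = C (coeff 0 h) := by
      ext m
      by_cases hm : m = 0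
      · subst hm; simp
      · rw [coeff_C, if_neg (Ne.symm hm)]
        by_contra hc
        have := (totalDegree_eq_zero_iff (Fin k) h).mp (le_antisymm hdeg (Nat.zero_le _))
          m (mem_support_iff.mpr hc)
        exact hm (Finsupp.ext this)
    have := hv (fun _ => 0) (by simp)
    rw [hC] at this ⊢
    rw [eval_C] at this
    rw [this, map_zero]
  | succ n ihn =>
    intro k
    induction k with
    | zero =>
      intro a ha h hdeg hv
      obtain ⟨c, rfl⟩ := C_surjective (Fin 0) h
      have := hv Fin.elim0 (by simp)
      rw [eval_C] at this
      rw [this, map_zero]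
    | succ k ihk =>
      intro a ha h hdeg hv
      set c := a 0 0 with hc
      set q := finSuccEquiv K k h with hq
      -- step 1: the partial evaluation at X 0 = c is zero
      have key : ∀ y : Fin k → K, eval y (Polynomial.eval (C c) q)
          = eval (Fin.cons c y) h := by
        intro y
        rw [eval_eq_eval_mv_eval', ← hq]
        calc eval y (Polynomial.eval (C c) q)
            = eval y (q.eval₂ (RingHom.id _) (C c)) := rfl
          _ = q.eval₂ ((eval y : MvPolynomial (Fin k) K →+* K).comp (RingHom.id _))
                (eval y (C c)) := Polynomial.hom_eval₂ _ _ _ _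
          _ = Polynomial.eval c (q.map (eval y)) := by
                rw [RingHom.comp_id, eval_C, ← Polynomial.eval_map]
      have h₀ : Polynomial.eval (C c) q = 0 := by
        apply ihk (fun i => a i.succ) (fun i => ha i.succ)
        · -- total degree bound
          rw [Polynomial.eval_eq_sum_range]
          apply totalDegree_finsetSum_le
          intro i _
          by_cases hne : q.coeff i = 0
          · simp [hne]
          · refine (totalDegree_mul _ _).trans ?_
            have h1 : (C c ^ i : MvPolynomial (Fin k) K).totalDegree = 0 := by
              rw [← map_pow, totalDegree_C]
            have h2 := totalDegree_coeff_finSuccEquiv_add_le h i (by rw [← hq]; exact hne)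
            rw [← hq] at h2
            omega
        · intro t' ht'
          rw [key]
          set T : Fin (k+1) → Fin (n+2) := Fin.cons 0 t' with hTd
          have : (Fin.cons c (fun i => a i.succ (t' i)) : Fin (k+1) → K)
              = fun i => a i (T i) := by
            funext i
            refine Fin.cases ?_ (fun i => ?_) i <;> simp [hTd, hc]
          rw [this]
          apply hv
          rw [Fin.sum_univ_succ]
          simpa [hTd] using ht'
      -- step 2: factor
      have hroot : (Polynomial.X - Polynomial.C (C c)) ∣ q :=
        Polynomial.dvd_iff_isRoot.mpr h₀
      obtain ⟨q', hq'⟩ := hroot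
      set h' := (finSuccEquiv K k).symm q' with hh'
      have hfact : h = (X 0 - C c) * h' := by
        apply (finSuccEquiv K k).injective
        rw [map_mul, map_sub, finSuccEquiv_X_zero]
        rw [show (finSuccEquiv K k) (C c) = Polynomial.C (C c) by
          apply (finSuccEquiv K k).symm.injective
          rw [AlgEquiv.symm_apply_apply]
          exact (RingHom.congr_fun (finSuccEquiv_comp_C_eq_C k) c).symm]
        rw [hh', AlgEquiv.apply_symm_apply, ← hq', ← hq]
      have hdeg' : h'.totalDegree ≤ n := by
        apply deg_factor (0 : Fin (k+1)) c
        rw [← hfact]; exact hdeg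
      have hvan' : ∀ t : Fin (k+1) → Fin (n+1),
          (∑ i, (t i : ℕ)) ≤ n →
          eval (fun i => a i (if i = 0 then (t i).succ else (t i).castSucc)) h' = 0 := by
        intro t ht
        set T : Fin (k+1) → Fin (n+2) :=
          fun i => if i = 0 then (t i).succ else (t i).castSucc with hT
        have hvT : eval (fun i => a i (T i)) h = 0 := by
          apply hv
          have : ∀ i, (T i : ℕ) = (if i = 0 then (t i : ℕ) + 1 else (t i : ℕ)) := by
            intro i
            by_cases hi : i = 0 <;> simp [hT, hi]
          rw [Finset.sum_congr rfl (fun i _ => this i), Fin.sum_univ_succ, if_pos rfl]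
          have : ∑ i : Fin k, (if i.succ = 0 then ((t i.succ : ℕ)) + 1 else (t i.succ : ℕ))
              = ∑ i : Fin k, (t i.succ : ℕ) := by
            apply Finset.sum_congr rfl
            intro i _
            rw [if_neg (Fin.succ_ne_zero i)]
          rw [this]
          have := Fin.sum_univ_succ (fun i => (t i : ℕ))
          omega
        rw [hfact, map_mul] at hvT
        rcases mul_eq_zero.mp hvT with h0 | h0
        · exfalso
          rw [map_sub, eval_X, eval_C, sub_eq_zero] at h0
          have : T 0 = 0 := ha 0 (h0.trans hc)
          rw [hT] at this
          simp only [if_pos rfl] at this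
          exact Fin.succ_ne_zero _ this
        · exact h0
      have := ihn (k+1) (fun i j => a i (if i = 0 then j.succ else j.castSucc))
        (by
          intro i x y hxy
          have := ha i hxy
          by_cases hi : i = 0
          · rw [if_pos hi, if_pos hi] at this
            exact Fin.succ_injective _ this
          · rw [if_neg hi, if_neg hi] at this
            exact Fin.castSucc_injective _ this)
        h' hdeg' hvan'
      rw [hfact, this, mul_zero]

/-- A polynomial of total degree at most `n` in `k` variables over a field `K`
is uniquely determined by its values on the combinatorial simplex
`{(a 1 (t 1), …, a k (t k)) : t 1 + ⋯ + t k ≤ n}`, where each `A i = {a i 0, …, a i n}`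
consists of `n+1` pairwise distinct elements of `K`. -/
theorem stmt_0 {K : Type*} [Field K] (k n : ℕ) (hk : 0 < k) (hn : 0 < n)
    (a : Fin k → Fin (n + 1) → K) (ha : ∀ i, Function.Injective (a i))
    (f g : MvPolynomial (Fin k) K)
    (hf : f.totalDegree ≤ n) (hg : g.totalDegree ≤ n)
    (h : ∀ t : Fin k → Fin (n + 1), (∑ i, (t i : ℕ)) ≤ n →
      eval (fun i => a i (t i)) f = eval (fun i => a i (t i)) g) :
    f = g := by
  rw [← sub_eq_zero]
  apply aux_vanish n k a ha
  · exact (totalDegree_sub f g).trans (max_le hf hg)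
  · intro t ht
    rw [map_sub, sub_eq_zero]
    exact h t ht
end

section
/- If a polynomial f in k variables over a field of characteristic zero has total degree at most n and vanishes on all points (t_1,...,t_k) with nonnegative integers t_i summing to at most n-1, then f(x_1,...,x_k) = ∑_{c_1+...+c_k=n} f(c_1,...,c_k) · ∏_{i=1}^k binom(x_i, c_i), where binom(x,c) = x(x-1)···(x-c+1)/c! is the polynomial binomial coefficient. -/
open MvPolynomial Finset

/-- The falling factorial of a multivariate polynomial: `p (p-1) ⋯ (p-m+1)`. -/
noncomputable def fallFac {k : ℕ} (p : MvPolynomial (Fin k) ℚ) (m : ℕ) :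
    MvPolynomial (Fin k) ℚ :=
  ∏ j ∈ Finset.range m, (p - (j : MvPolynomial (Fin k) ℚ))

/-- The polynomial binomial coefficient `binom(X i, c) = X i (X i - 1)⋯(X i - c + 1)/c!`. -/
noncomputable def binomPoly {k : ℕ} (i : Fin k) (c : ℕ) : MvPolynomial (Fin k) ℚ :=
  C ((c.factorial : ℚ)⁻¹) * fallFac (X i) c

lemma eval_bind₁' {k : ℕ} (v : Fin k → ℚ) (φ : Fin k → MvPolynomial (Fin k) ℚ)
    (p : MvPolynomial (Fin k) ℚ) :
    eval v (bind₁ φ p) = eval (fun i => eval v (φ i)) p :=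
  eval₂Hom_bind₁ _ _ _ _

lemma totalDegree_bind₁_le {k : ℕ} (φ : Fin k → MvPolynomial (Fin k) ℚ)
    (hφ : ∀ i, (φ i).totalDegree ≤ 1) (p : MvPolynomial (Fin k) ℚ) :
    (bind₁ φ p).totalDegree ≤ p.totalDegree := by
  conv_lhs => rw [p.as_sum, map_sum]
  refine totalDegree_finsetSum_le fun m hm => ?_
  rw [bind₁_monomial]
  refine (totalDegree_mul _ _).trans ?_
  rw [totalDegree_C, zero_add]
  refine (totalDegree_finset_prod _ _).trans ?_
  refine le_trans (Finset.sum_le_sum fun i _ => ((totalDegree_pow _ _).trans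
    (by exact Nat.mul_le_mul_left _ (hφ i)))) ?_
  simp only [Nat.mul_one]
  calc ∑ i ∈ m.support, m i = m.sum fun _ e => e := by rw [Finsupp.sum]
  _ ≤ p.totalDegree := le_totalDegree hm

lemma vanish_zero : ∀ (k n : ℕ) (f : MvPolynomial (Fin k) ℚ), f.totalDegree ≤ n →
    (∀ t : Fin k → ℕ, (∑ i, t i) ≤ n → eval (fun i => (t i : ℚ)) f = 0) → f = 0 := by
  intro k
  induction k with
  | zero =>
    intro n f hdeg hvan
    obtain ⟨a, rfl⟩ := C_surjective (Fin 0) f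
    have := hvan (fun _ => 0) (by simp)
    rw [eval_C] at this
    rw [this, map_zero]
  | succ k ihk =>
    intro n
    induction n with
    | zero =>
      intro f hdeg hvan
      have h0 : f.totalDegree = 0 := Nat.le_zero.mp hdeg
      have hf : f = C (coeff 0 f) := by
        ext m
        by_cases hm : m = 0
        · subst hm; simp
        · rw [coeff_C, if_neg (Ne.symm hm)]
          by_contra hc
          have hmem : m ∈ f.support := mem_support_iff.mpr hc
          have := (totalDegree_eq_zero_iff _ f).mp h0 m hmem
          exact hm (Finsupp.ext fun x => this x)
      have := hvan (fun _ => 0) (by simp)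
      rw [hf] at this ⊢
      rw [eval_C] at this
      rw [this, map_zero]
    | succ n ihn =>
      intro f hdeg hvan
      set F := finSuccEquiv ℚ k f with hF
      have hcast : ∀ t : Fin k → ℕ, (fun i => ((Fin.cons 0 t : Fin (k+1) → ℕ) i : ℚ))
          = Fin.cons (0:ℚ) (fun i => (t i : ℚ)) := by
        intro t; funext i
        refine Fin.cases ?_ (fun j => ?_) i <;> simp
      have h0 : F.coeff 0 = 0 := by
        by_cases hc : F.coeff 0 = 0
        · exact hc
        refine ihk (n+1) _ ?_ ?_
        · have := totalDegree_coeff_finSuccEquiv_add_le f 0 hc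
          rw [← hF] at this
          omega
        · intro t ht
          have h1 := hvan (Fin.cons 0 t) (by rw [Fin.sum_cons]; omega)
          rw [hcast t, eval_eq_eval_mv_eval'] at h1
          rwa [← Polynomial.coeff_zero_eq_eval_zero, Polynomial.coeff_map] at h1
      set g : MvPolynomial (Fin (k+1)) ℚ := (finSuccEquiv ℚ k).symm F.divX with hg
      have hf : f = X 0 * g := by
        apply (finSuccEquiv ℚ k).injective
        rw [map_mul, finSuccEquiv_X_zero, AlgEquiv.apply_symm_apply, ← hF]
        conv_lhs => rw [← Polynomial.X_mul_divX_add F]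
        rw [h0, map_zero, add_zero]
      by_cases hg0 : g = 0
      · rw [hf, hg0, mul_zero]
      have hgdeg : g.totalDegree ≤ n := by
        rw [totalDegree]
        refine Finset.sup_le fun m hm => ?_
        have hco : coeff (Finsupp.single 0 1 + m) f ≠ 0 := by
          rw [hf, coeff_X_mul]
          exact mem_support_iff.mp hm
        have hle := le_totalDegree (mem_support_iff.mpr hco)
        have hsum : ((Finsupp.single (0 : Fin (k+1)) 1 + m).sum fun _ e => e)
            = 1 + m.sum fun _ e => e := by
          rw [Finsupp.sum_add_index (by simp) (by simp)]
          simp [Finsupp.sum_single_index]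
        rw [hsum] at hle
        omega
      -- g vanishes at points with first coordinate ≥ 1 and total sum ≤ n+1
      have hgvan : ∀ t : Fin (k+1) → ℕ, t 0 ≠ 0 → (∑ i, t i) ≤ n + 1 →
          eval (fun i => (t i : ℚ)) g = 0 := by
        intro t ht0 hts
        have h1 := hvan t hts
        rw [hf, map_mul, eval_X] at h1
        have : ((t 0 : ℚ)) ≠ 0 := Nat.cast_ne_zero.mpr ht0
        exact (mul_eq_zero.mp h1).resolve_left this
      -- shift in variable 0
      set φ : Fin (k+1) → MvPolynomial (Fin (k+1)) ℚ :=
        fun i => if i = 0 then X 0 + 1 else X i with hφdef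
      set h : MvPolynomial (Fin (k+1)) ℚ := bind₁ φ g with hh
      have hφdeg : ∀ i, (φ i).totalDegree ≤ 1 := by
        intro i
        by_cases hi : i = 0 <;> simp only [hφdef, hi, if_true, if_false]
        · exact (totalDegree_add _ _).trans (by simp [totalDegree_X])
        · simp [hi, totalDegree_X]
      have hhdeg : h.totalDegree ≤ n := (totalDegree_bind₁_le φ hφdeg g).trans hgdeg
      have hhvan : ∀ t : Fin (k+1) → ℕ, (∑ i, t i) ≤ n →
          eval (fun i => (t i : ℚ)) h = 0 := by
        intro t ht
        rw [hh, eval_bind₁']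
        set t' : Fin (k+1) → ℕ := fun i => if i = 0 then t 0 + 1 else t i with ht'
        have hpt : (fun i => eval (fun j => (t j : ℚ)) (φ i)) = fun i => (t' i : ℚ) := by
          funext i
          by_cases hi : i = 0 <;> simp [hφdef, ht', hi]
        rw [hpt]
        refine hgvan t' (by simp [ht']) ?_
        have e1 : ∑ i, t' i = (t 0 + 1) + ∑ i : Fin k, t' i.succ := by
          rw [Fin.sum_univ_succ]; simp [ht']
        have e2 : ∑ i, t i = t 0 + ∑ i : Fin k, t i.succ := by
          rw [Fin.sum_univ_succ]
        have e3 : ∀ i : Fin k, t' i.succ = t i.succ := by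
          intro i; simp [ht', Fin.succ_ne_zero]
        rw [e1, Finset.sum_congr rfl fun i _ => e3 i]
        omega
      have hh0 : h = 0 := ihn h hhdeg hhvan
      -- invert the shift
      set ψ : Fin (k+1) → MvPolynomial (Fin (k+1)) ℚ :=
        fun i => if i = 0 then X 0 - 1 else X i with hψdef
      have hinv : bind₁ ψ h = g := by
        rw [hh, bind₁_bind₁]
        have : (fun i => bind₁ ψ (φ i)) = (X : Fin (k+1) → MvPolynomial (Fin (k+1)) ℚ) := by
          funext i
          by_cases hi : i = 0 <;> simp [hφdef, hψdef, hi, bind₁_X_right]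
        rw [this, bind₁_X_left, AlgHom.id_apply]
      rw [hh0, map_zero] at hinv
      exact absurd hinv.symm hg0


lemma eval_fallFac {k : ℕ} (v : Fin k → ℚ) (i : Fin k) (c : ℕ) :
    eval v (fallFac (X i) c) = ∏ j ∈ range c, (v i - j) := by
  simp [fallFac]

lemma eval_binomPoly_lt {k : ℕ} (t : Fin k → ℕ) (c : ℕ) (i : Fin k) (h : t i < c) :
    eval (fun j => (t j : ℚ)) (binomPoly i c) = 0 := by
  rw [binomPoly, map_mul, eval_C, eval_fallFac,
    Finset.prod_eq_zero (Finset.mem_range.mpr h) (by simp), mul_zero]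

lemma eval_binomPoly_self {k : ℕ} (t : Fin k → ℕ) (i : Fin k) :
    eval (fun j => (t j : ℚ)) (binomPoly i (t i)) = 1 := by
  rw [binomPoly, map_mul, eval_C, eval_fallFac]
  have h1 : ∏ j ∈ range (t i), ((t i : ℚ) - j) = ((t i).factorial : ℚ) := by
    rw [Finset.prod_congr rfl (fun j hj =>
        (Nat.cast_sub (Finset.mem_range.mp hj).le).symm : ∀ j ∈ range (t i),
        ((t i : ℚ) - (j : ℚ)) = ((t i - j : ℕ) : ℚ)), ← Nat.cast_prod,
      ← Nat.descFactorial_eq_prod_range, Nat.descFactorial_self]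
  rw [h1, inv_mul_cancel₀ (by exact_mod_cast (Nat.factorial_ne_zero _))]

lemma totalDegree_binomPoly_le {k : ℕ} (i : Fin k) (c : ℕ) :
    (binomPoly i c).totalDegree ≤ c := by
  rw [binomPoly]
  refine (totalDegree_mul _ _).trans ?_
  rw [totalDegree_C, zero_add, fallFac]
  refine (totalDegree_finset_prod _ _).trans ?_
  have hb : ∀ j ∈ range c, (X i - (j : MvPolynomial (Fin k) ℚ)).totalDegree ≤ 1 := by
    intro j _
    have hc : ((j : ℕ) : MvPolynomial (Fin k) ℚ) = C ((j : ℕ) : ℚ) :=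
      (map_natCast (C : ℚ →+* MvPolynomial (Fin k) ℚ) j).symm
    rw [hc, sub_eq_add_neg]
    refine (totalDegree_add _ _).trans (max_le ?_ ?_)
    · rw [totalDegree_X]
    · rw [totalDegree_neg, totalDegree_C]; omega
  refine le_trans (Finset.sum_le_sum hb) ?_
  simp


/-- If `f` has total degree at most `n` and vanishes on all tuples of nonnegative
integers with sum `< n`, then `f = ∑_{c₁+⋯+c_k=n} f(c) ∏ᵢ binom(xᵢ, cᵢ)`. -/
theorem stmt_1 (k n : ℕ) (hk : 0 < k) (f : MvPolynomial (Fin k) ℚ)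
    (hdeg : f.totalDegree ≤ n)
    (hvan : ∀ t : Fin k → ℕ, (∑ i, t i) < n → eval (fun i => (t i : ℚ)) f = 0) :
    f = ∑ c ∈ (Fintype.piFinset fun _ : Fin k => Finset.range (n + 1)).filter
        (fun c => ∑ i, c i = n),
      C (eval (fun i => (c i : ℚ)) f) * ∏ i, binomPoly i (c i) := by
  set S := (Fintype.piFinset fun _ : Fin k => Finset.range (n + 1)).filter
      (fun c => ∑ i, c i = n) with hS
  set R := ∑ c ∈ S, C (eval (fun i => (c i : ℚ)) f) * ∏ i, binomPoly i (c i) with hR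
  have hRdeg : R.totalDegree ≤ n := by
    refine totalDegree_finsetSum_le fun c hc => ?_
    refine (totalDegree_mul _ _).trans ?_
    rw [totalDegree_C, zero_add]
    refine (totalDegree_finset_prod _ _).trans ?_
    refine le_trans (Finset.sum_le_sum fun i _ => totalDegree_binomPoly_le i (c i)) ?_
    exact le_of_eq (Finset.mem_filter.mp hc).2
  have hlt : ∀ t c : Fin k → ℕ, (∑ i, t i) < ∑ i, c i → ∃ i, t i < c i := by
    intro t c hsum
    by_contra hcon
    push_neg at hcon
    exact absurd (Finset.sum_le_sum fun i (_ : i ∈ univ) => hcon i) (by omega)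
  have hevalR : ∀ t : Fin k → ℕ, eval (fun i => (t i : ℚ)) R =
      ∑ c ∈ S, eval (fun i => (c i : ℚ)) f
        * ∏ i, eval (fun j => (t j : ℚ)) (binomPoly i (c i)) := by
    intro t
    rw [hR, map_sum]
    exact Finset.sum_congr rfl fun c _ => by rw [map_mul, eval_C, map_prod]
  have key : ∀ t : Fin k → ℕ, (∑ i, t i) ≤ n → eval (fun i => (t i : ℚ)) (f - R) = 0 := by
    intro t ht
    rw [map_sub]
    rcases Nat.lt_or_ge (∑ i, t i) n with hlt' | hge
    · rw [hvan t hlt', hevalR, Finset.sum_eq_zero, sub_self]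
      intro c hc
      obtain ⟨i, hi⟩ := hlt t c (by rw [(Finset.mem_filter.mp hc).2]; exact hlt')
      rw [Finset.prod_eq_zero (Finset.mem_univ i) (eval_binomPoly_lt t (c i) i hi), mul_zero]
    · have heq : ∑ i, t i = n := le_antisymm ht hge
      have htS : t ∈ S := by
        refine Finset.mem_filter.mpr ⟨Fintype.mem_piFinset.mpr fun i => Finset.mem_range.mpr ?_, heq⟩
        have := Finset.single_le_sum (f := t) (fun i _ => Nat.zero_le _) (Finset.mem_univ i)
        omega
      rw [hevalR, Finset.sum_eq_single_of_mem t htS]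
      · rw [Finset.prod_congr rfl fun i _ => eval_binomPoly_self t i, Finset.prod_const_one,
          mul_one, sub_self]
      · intro c hc hne
        have hex : ∃ i, t i < c i := by
          by_contra hcon
          push_neg at hcon
          have hcs : ∑ i, c i = n := (Finset.mem_filter.mp hc).2
          refine hne (funext fun i => ?_)
          by_contra hne2
          have h1 : c i < t i := lt_of_le_of_ne (hcon i) hne2
          have := Finset.sum_lt_sum (fun j (_ : j ∈ univ) => hcon j) ⟨i, Finset.mem_univ i, h1⟩
          omega
        obtain ⟨i, hi⟩ := hex
        rw [Finset.prod_eq_zero (Finset.mem_univ i) (eval_binomPoly_lt t (c i) i hi), mul_zero]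
  have hdeg2 : (f - R).totalDegree ≤ n := by
    rw [sub_eq_add_neg]
    refine (totalDegree_add _ _).trans (max_le hdeg ?_)
    rwa [totalDegree_neg]
  have h0 := vanish_zero k n (f - R) hdeg2 key
  exact sub_eq_zero.mp h0
end

section
/- The following polynomial identity holds: ∏_{1≤i<j≤k}(x_j - x_i) · ((∑_{i=1}^k x_i) - k(k-1)/2)^{(n)} = ∑_{n_1+...+n_k = n + k(k-1)/2} (n!/∏ n_i!) · ∏_{i<j}(n_j - n_i) · ∏_{i=1}^k x_i^{(n_i)}, where y^{(n)} = y(y-1)···(y-n+1) denotes a falling factorial and the sum is over k-tuples of nonnegative integers. -/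
open MvPolynomial Finset

section ffacSection
variable {R : Type*} [CommRing R]

/-- Falling factorial in any commutative ring. -/
noncomputable def ffac (p : R) (m : ℕ) : R := ∏ j ∈ Finset.range m, (p - (j : R))

@[simp] lemma ffac_zero' (p : R) : ffac p 0 = 1 := by simp [ffac]

lemma ffac_succ (p : R) (m : ℕ) : ffac p (m+1) = ffac p m * (p - m) := by
  simp [ffac, Finset.prod_range_succ]

lemma ffac_add (p : R) (a b : ℕ) : ffac p (a + b) = ffac p a * ffac (p - a) b := by
  rw [ffac, Finset.prod_range_add]
  congr 1
  refine Finset.prod_congr rfl fun j _ => ?_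
  push_cast
  ring

lemma ffac_binomial (p q : R) (n : ℕ) :
    ffac (p + q) n = ∑ ab ∈ Finset.HasAntidiagonal.antidiagonal n,
      (n.choose ab.1) • (ffac p ab.1 * ffac q ab.2) := by
  induction n with
  | zero => simp
  | succ n ih =>
    have step : ffac (p + q) (n+1) =
        (∑ ab ∈ Finset.HasAntidiagonal.antidiagonal n, (n.choose ab.1) • (ffac p (ab.1+1) * ffac q ab.2)) +
        (∑ ab ∈ Finset.HasAntidiagonal.antidiagonal n, (n.choose ab.1) • (ffac p ab.1 * ffac q (ab.2+1))) := by
      rw [ffac_succ, ih, Finset.sum_mul, ← Finset.sum_add_distrib]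
      refine Finset.sum_congr rfl fun ab hab => ?_
      have h : ab.1 + ab.2 = n := Finset.HasAntidiagonal.mem_antidiagonal.mp hab
      have hcast : (n : R) = (ab.1 : R) + (ab.2 : R) := by
        rw [← h]; push_cast; ring
      rw [smul_mul_assoc, ← smul_add]
      congr 1
      rw [ffac_succ, ffac_succ, hcast]
      ring
    have e2 : (∑ ab ∈ Finset.HasAntidiagonal.antidiagonal n, (n.choose ab.1) • (ffac p ab.1 * ffac q (ab.2+1)))
        = ∑ ab ∈ Finset.HasAntidiagonal.antidiagonal (n+1), (n.choose ab.1) • (ffac p ab.1 * ffac q ab.2) := by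
      rw [Finset.Nat.sum_antidiagonal_succ'
        (f := fun ab => (n.choose ab.1) • (ffac p ab.1 * ffac q ab.2))]
      simp [Nat.choose_succ_self]
    rw [step, e2, Finset.Nat.sum_antidiagonal_succ
        (f := fun ab => ((n+1).choose ab.1) • (ffac p ab.1 * ffac q ab.2)),
      Finset.Nat.sum_antidiagonal_succ
        (f := fun ab => (n.choose ab.1) • (ffac p ab.1 * ffac q ab.2))]
    simp only [Nat.choose_zero_right, Nat.choose_succ_succ, Nat.succ_eq_add_one, add_smul,
      Finset.sum_add_distrib]
    ring

lemma ffac_sum {ι : Type*} [DecidableEq ι] (s : Finset ι) (p : ι → R) (n : ℕ) :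
    ffac (∑ i ∈ s, p i) n =
      ∑ m ∈ s.piAntidiag n, (Nat.multinomial s m) • ∏ i ∈ s, ffac (p i) (m i) := by
  induction s using Finset.cons_induction generalizing n with
  | empty =>
    cases n with
    | zero => simp [ffac]
    | succ n =>
      rw [Finset.sum_empty, Finset.piAntidiag_empty_of_ne_zero (Nat.succ_ne_zero n),
        Finset.sum_empty, ffac]
      refine Finset.prod_eq_zero (Finset.mem_range.mpr (Nat.succ_pos n)) ?_
      simp
  | cons a s has ih =>
    rw [Finset.sum_cons, ffac_binomial, Finset.piAntidiag_cons has, Finset.sum_disjiUnion]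
    refine Finset.sum_congr rfl fun ab hab => ?_
    have hn : ab.1 + ab.2 = n := Finset.HasAntidiagonal.mem_antidiagonal.mp hab
    rw [Finset.sum_map, ih, Finset.mul_sum, Finset.smul_sum]
    refine Finset.sum_congr rfl fun g hg => ?_
    obtain ⟨hgsum, hgsupp⟩ := Finset.mem_piAntidiag.mp hg
    have hga : g a = 0 := by
      by_contra h; exact has (hgsupp a h)
    simp only [addRightEmbedding_apply]
    rw [Nat.multinomial_cons, Finset.prod_cons]
    have h1 : (g + fun t => if t = a then ab.1 else 0) a = ab.1 := by simp [hga]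
    have h2 : ∀ i ∈ s, (g + fun t => if t = a then ab.1 else 0) i = g i := by
      intro i hi
      have : i ≠ a := fun h => has (h ▸ hi)
      simp [this]
    have h3 : ∑ i ∈ s, (g + fun t => if t = a then ab.1 else 0) i = ab.2 := by
      rw [Finset.sum_congr rfl h2, hgsum]
    have h4 : Nat.multinomial s (g + fun t => if t = a then ab.1 else 0)
        = Nat.multinomial s g := Nat.multinomial_congr h2
    have h5 : ∏ i ∈ s, ffac (p i) ((g + fun t => if t = a then ab.1 else 0) i)
        = ∏ i ∈ s, ffac (p i) (g i) := Finset.prod_congr rfl fun i hi => by rw [h2 i hi]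
    rw [h1, h3, h4, h5, hn, mul_smul_comm, smul_smul]

end ffacSection

lemma prod_pairs {M : Type*} [CommMonoid M] {k : ℕ} (f : Fin k → Fin k → M) :
    ∏ p ∈ Finset.univ.filter (fun p : Fin k × Fin k => p.1 < p.2), f p.1 p.2
      = ∏ i : Fin k, ∏ j ∈ Finset.Ioi i, f i j := by
  rw [Finset.prod_sigma']
  refine Finset.prod_nbij' (fun p => ⟨p.1, p.2⟩) (fun x => (x.1, x.2)) ?_ ?_ ?_ ?_ ?_ <;>
    simp [Finset.mem_sigma, Finset.mem_Ioi]

lemma descPochhammer_eval_eq_ffac {S : Type*} [CommRing S] (m : ℕ) (x : S) :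
    (descPochhammer S m).eval x = ffac x m := by
  induction m with
  | zero => simp [ffac]
  | succ m ih => rw [descPochhammer_succ_eval, ih, ffac_succ]

lemma ffac_natCast {S : Type*} [CommRing S] (c m : ℕ) :
    ffac ((c : S)) m = (c.descFactorial m : S) := by
  rw [← descPochhammer_eval_eq_ffac, descPochhammer_eval_eq_descFactorial]

lemma det_expand {S : Type*} [CommRing S] {k : ℕ} (M : Matrix (Fin k) (Fin k) S) :
    M.det = ∑ σ : Equiv.Perm (Fin k), ((Equiv.Perm.sign σ : ℤ) : S) * ∏ i, M i (σ i) := by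
  rw [← Matrix.det_transpose, Matrix.det_apply']
  rfl

lemma vand_ffac {S : Type*} [CommRing S] [Nontrivial S] [NoZeroDivisors S] {k : ℕ}
    (v : Fin k → S) :
    ∏ i : Fin k, ∏ j ∈ Finset.Ioi i, (v j - v i)
      = ∑ σ : Equiv.Perm (Fin k), ((Equiv.Perm.sign σ : ℤ) : S) * ∏ i, ffac (v i) ((σ i : ℕ)) := by
  rw [← Matrix.det_vandermonde,
    Matrix.det_eval_matrixOfPolynomials_eq_det_vandermonde v
      (fun j => descPochhammer S (j : ℕ))
      (fun i => descPochhammer_natDegree S (i : ℕ)) (fun i => monic_descPochhammer S (i : ℕ)),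
    det_expand]
  refine Finset.sum_congr rfl fun σ _ => ?_
  congr 1
  exact Finset.prod_congr rfl fun i _ => by
    rw [Matrix.of_apply, descPochhammer_eval_eq_ffac]

lemma fallFac_eq_ffac {k : ℕ} (p : MvPolynomial (Fin k) ℚ) (m : ℕ) :
    fallFac p m = ffac p m := rfl

/-- `∏_{i<j}(x_j - x_i) · (∑ xᵢ - k(k-1)/2)^{(n)}
  = ∑_{n₁+⋯+n_k = n + k(k-1)/2} (n!/∏ nᵢ!) ∏_{i<j}(n_j-n_i) ∏ᵢ xᵢ^{(nᵢ)}`. -/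
theorem stmt_5 (k n : ℕ) (hk : 0 < k) :
    (∏ p ∈ Finset.univ.filter (fun p : Fin k × Fin k => p.1 < p.2), (X p.2 - X p.1)) *
        fallFac ((∑ i : Fin k, X i) - ((k * (k - 1) / 2 : ℕ) : MvPolynomial (Fin k) ℚ)) n =
      ∑ c ∈ (Fintype.piFinset fun _ : Fin k => Finset.range (n + k * (k - 1) / 2 + 1)).filter
          (fun c => ∑ i, c i = n + k * (k - 1) / 2),
        C ((n.factorial : ℚ) / (∏ i, ((c i).factorial : ℚ)) *
            ∏ p ∈ Finset.univ.filter (fun p : Fin k × Fin k => p.1 < p.2),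
              ((c p.2 : ℚ) - (c p.1 : ℚ))) *
          ∏ i, fallFac (X i) (c i) := by
  classical
  have hT : ∑ i : Fin k, (i : ℕ) = k * (k - 1) / 2 := by
    rw [← Finset.sum_range_id k]
    exact Fin.sum_univ_eq_sum_range (fun i => i) k
  have hperm : ∀ σ : Equiv.Perm (Fin k), ∑ i : Fin k, ((σ i : ℕ)) = k * (k - 1) / 2 :=
    fun σ => (Equiv.sum_comp σ (Fin.val)).trans hT
  have hB : (Fintype.piFinset fun _ : Fin k => Finset.range (n + k * (k - 1) / 2 + 1)).filter
      (fun c => ∑ i, c i = n + k * (k - 1) / 2)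
      = Finset.univ.piAntidiag (n + k * (k - 1) / 2) := by
    ext c
    simp only [Finset.mem_filter, Fintype.mem_piFinset, Finset.mem_range,
      Finset.mem_piAntidiag, Finset.mem_univ, implies_true, and_true]
    constructor
    · rintro ⟨_, h2⟩; exact h2
    · intro h1
      refine ⟨fun i => ?_, h1⟩
      have h2 : c i ≤ ∑ i, c i :=
        Finset.single_le_sum (f := c) (fun i _ => Nat.zero_le _) (Finset.mem_univ i)
      have h3 : Finset.univ.sum c = ∑ i, c i := rfl
      omega
  -- the key per-permutation expansion
  have key : ∀ σ : Equiv.Perm (Fin k),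
      (∏ i, ffac (X i : MvPolynomial (Fin k) ℚ) ((σ i : ℕ))) *
        ffac ((∑ i : Fin k, X i) - ((k * (k - 1) / 2 : ℕ) : MvPolynomial (Fin k) ℚ)) n
      = ∑ c ∈ Finset.univ.piAntidiag (n + k * (k - 1) / 2),
          C ((n.factorial : ℚ) / (∏ i, ((c i).factorial : ℚ)) *
              ∏ i, (((c i).descFactorial (σ i) : ℕ) : ℚ)) *
            ∏ i, ffac (X i) (c i) := by
    intro σ
    have hsub : ((∑ i : Fin k, X i) - ((k * (k - 1) / 2 : ℕ) : MvPolynomial (Fin k) ℚ))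
        = ∑ i : Fin k, ((X i : MvPolynomial (Fin k) ℚ) -
            (((σ i : ℕ) : ℕ) : MvPolynomial (Fin k) ℚ)) := by
      rw [Finset.sum_sub_distrib]
      congr 1
      rw [← hperm σ, Nat.cast_sum]
    rw [hsub, ffac_sum, Finset.mul_sum]
    have step1 : ∀ m ∈ Finset.univ.piAntidiag n,
        (∏ i, ffac (X i : MvPolynomial (Fin k) ℚ) ((σ i : ℕ))) *
          ((Nat.multinomial Finset.univ m) •
            ∏ i, ffac ((X i : MvPolynomial (Fin k) ℚ) -
              (((σ i : ℕ) : ℕ) : MvPolynomial (Fin k) ℚ)) (m i))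
        = (Nat.multinomial Finset.univ m) •
            ∏ i, ffac (X i : MvPolynomial (Fin k) ℚ) ((σ i : ℕ) + m i) := by
      intro m _
      rw [mul_smul_comm, ← Finset.prod_mul_distrib]
      congr 1
      exact Finset.prod_congr rfl fun i _ => (ffac_add _ _ _).symm
    rw [Finset.sum_congr rfl step1]
    have reindex : ∑ m ∈ Finset.univ.piAntidiag n,
        (Nat.multinomial Finset.univ m) •
          ∏ i, ffac (X i : MvPolynomial (Fin k) ℚ) ((σ i : ℕ) + m i)
      = ∑ c ∈ (Finset.univ.piAntidiag (n + k * (k - 1) / 2)).filter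
            (fun c => ∀ i, (σ i : ℕ) ≤ c i),
          (Nat.multinomial Finset.univ (fun i => c i - (σ i : ℕ))) •
            ∏ i, ffac (X i : MvPolynomial (Fin k) ℚ) (c i) := by
      refine Finset.sum_nbij' (fun m => fun t => (σ t : ℕ) + m t)
        (fun c => fun t => c t - (σ t : ℕ)) ?_ ?_ ?_ ?_ ?_
      · intro m hm
        obtain ⟨h1, -⟩ := Finset.mem_piAntidiag.mp hm
        refine Finset.mem_filter.mpr ⟨Finset.mem_piAntidiag.mpr
          ⟨?_, fun i _ => Finset.mem_univ i⟩, fun i => Nat.le_add_right _ _⟩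
        rw [Finset.sum_add_distrib, hperm σ, h1]
        omega
      · intro c hc
        obtain ⟨hc1, hle⟩ := Finset.mem_filter.mp hc
        obtain ⟨h1, -⟩ := Finset.mem_piAntidiag.mp hc1
        refine Finset.mem_piAntidiag.mpr ⟨?_, fun i _ => Finset.mem_univ i⟩
        rw [Finset.sum_tsub_distrib _ (fun i _ => hle i), h1, hperm σ]
        omega
      · intro m _; funext t
        show (σ t : ℕ) + m t - (σ t : ℕ) = m t
        omega
      · intro c hc; funext t
        have := (Finset.mem_filter.mp hc).2 t
        show (σ t : ℕ) + (c t - (σ t : ℕ)) = c t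
        omega
      · intro m _
        simp only []
        congr 1
        refine Nat.multinomial_congr fun t _ => ?_
        omega
    rw [reindex]
    have hterm : ∀ c ∈ (Finset.univ.piAntidiag (n + k * (k - 1) / 2)).filter
          (fun c => ∀ i, (σ i : ℕ) ≤ c i),
        (Nat.multinomial Finset.univ (fun i => c i - (σ i : ℕ))) •
            (∏ i, ffac (X i : MvPolynomial (Fin k) ℚ) (c i))
        = C ((n.factorial : ℚ) / (∏ i, ((c i).factorial : ℚ)) *
              ∏ i, (((c i).descFactorial (σ i) : ℕ) : ℚ)) *
            ∏ i, ffac (X i) (c i) := by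
      intro c hc
      obtain ⟨hc1, hle⟩ := Finset.mem_filter.mp hc
      obtain ⟨hsum, -⟩ := Finset.mem_piAntidiag.mp hc1
      have hm : ∑ i, (c i - (σ i : ℕ)) = n := by
        rw [Finset.sum_tsub_distrib _ (fun i _ => hle i), hsum, hperm σ]
        omega
      have hfact : ∀ i : Fin k, ((c i).factorial : ℚ)
          = (((c i).descFactorial (σ i) : ℕ) : ℚ) * ((c i - (σ i : ℕ)).factorial : ℚ) := by
        intro i
        rw [← Nat.cast_mul, mul_comm, Nat.factorial_mul_descFactorial (hle i)]
      have hDne : ∀ i : Fin k, ((((c i).descFactorial (σ i) : ℕ)) : ℚ) ≠ 0 := by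
        intro i
        rw [Nat.cast_ne_zero, Ne, Nat.descFactorial_eq_zero_iff_lt, not_lt]
        exact hle i
      have hmult : ((Nat.multinomial Finset.univ fun i => c i - (σ i : ℕ)) : ℚ)
          = (n.factorial : ℚ) / (∏ i, ((c i).factorial : ℚ)) *
              ∏ i, (((c i).descFactorial (σ i) : ℕ) : ℚ) := by
        have hspec := Nat.multinomial_spec (s := Finset.univ)
          (f := fun i => c i - (σ i : ℕ))
        rw [hm] at hspec
        have hcast : (∏ i, ((c i - (σ i : ℕ)).factorial : ℚ)) *
            ((Nat.multinomial Finset.univ fun i => c i - (σ i : ℕ)) : ℚ)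
            = (n.factorial : ℚ) := by
          exact_mod_cast congrArg (Nat.cast : ℕ → ℚ) hspec
        have hcfact : (∏ i, ((c i).factorial : ℚ))
            = (∏ i, (((c i).descFactorial (σ i) : ℕ) : ℚ)) *
              ∏ i, ((c i - (σ i : ℕ)).factorial : ℚ) := by
          rw [← Finset.prod_mul_distrib]
          exact Finset.prod_congr rfl fun i _ => hfact i
        have hDprod : (∏ i, (((c i).descFactorial (σ i) : ℕ) : ℚ)) ≠ 0 :=
          Finset.prod_ne_zero_iff.mpr fun i _ => hDne i
        have hMne : (∏ i, (((c i - (σ i : ℕ)).factorial : ℕ) : ℚ)) ≠ 0 :=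
          Finset.prod_ne_zero_iff.mpr fun i _ =>
            Nat.cast_ne_zero.mpr (Nat.factorial_ne_zero _)
        rw [hcfact]
        field_simp
        linear_combination hcast
      rw [← hmult, nsmul_eq_mul]
      congr 1
    rw [Finset.sum_congr rfl hterm]
    refine Finset.sum_subset (Finset.filter_subset _ _) ?_
    intro c hc hcn
    have hex : ∃ i, c i < (σ i : ℕ) := by
      by_contra h
      push_neg at h
      exact hcn (Finset.mem_filter.mpr ⟨hc, h⟩)
    obtain ⟨i, hi⟩ := hex
    have hz : (((c i).descFactorial (σ i) : ℕ) : ℚ) = 0 := by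
      rw [Nat.descFactorial_eq_zero_iff_lt.mpr hi, Nat.cast_zero]
    have hz2 : (∏ i, (((c i).descFactorial (σ i) : ℕ) : ℚ)) = 0 :=
      Finset.prod_eq_zero (Finset.mem_univ i) hz
    rw [hz2, mul_zero, map_zero, zero_mul]
  -- main assembly
  rw [hB]
  simp only [fallFac_eq_ffac]
  rw [prod_pairs (fun i j => (X j : MvPolynomial (Fin k) ℚ) - X i), vand_ffac, Finset.sum_mul]
  have hassoc : ∀ σ : Equiv.Perm (Fin k),
      ((Equiv.Perm.sign σ : ℤ) : MvPolynomial (Fin k) ℚ) *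
        (∏ i, ffac (X i : MvPolynomial (Fin k) ℚ) ((σ i : ℕ))) *
        ffac ((∑ i : Fin k, X i) - ((k * (k - 1) / 2 : ℕ) : MvPolynomial (Fin k) ℚ)) n
      = ∑ c ∈ Finset.univ.piAntidiag (n + k * (k - 1) / 2),
          ((Equiv.Perm.sign σ : ℤ) : MvPolynomial (Fin k) ℚ) *
            (C ((n.factorial : ℚ) / (∏ i, ((c i).factorial : ℚ)) *
                ∏ i, (((c i).descFactorial (σ i) : ℕ) : ℚ)) *
              ∏ i, ffac (X i) (c i)) := by
    intro σ
    rw [mul_assoc, key σ, Finset.mul_sum]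
  rw [Finset.sum_congr rfl fun σ _ => hassoc σ, Finset.sum_comm]
  refine Finset.sum_congr rfl fun c hc => ?_
  have hC : ∀ σ : Equiv.Perm (Fin k),
      ((Equiv.Perm.sign σ : ℤ) : MvPolynomial (Fin k) ℚ) *
        (C ((n.factorial : ℚ) / (∏ i, ((c i).factorial : ℚ)) *
            ∏ i, (((c i).descFactorial (σ i) : ℕ) : ℚ)) *
          ∏ i, ffac (X i) (c i))
      = C (((Equiv.Perm.sign σ : ℤ) : ℚ) *
            ((n.factorial : ℚ) / (∏ i, ((c i).factorial : ℚ)) *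
              ∏ i, (((c i).descFactorial (σ i) : ℕ) : ℚ))) *
          ∏ i, ffac (X i) (c i) := by
    intro σ
    have hsgn : ((Equiv.Perm.sign σ : ℤ) : MvPolynomial (Fin k) ℚ)
        = C (((Equiv.Perm.sign σ : ℤ) : ℚ)) :=
      (map_intCast (C : ℚ →+* MvPolynomial (Fin k) ℚ) _).symm
    rw [hsgn, ← mul_assoc, ← map_mul]
  rw [Finset.sum_congr rfl fun σ _ => hC σ, ← Finset.sum_mul, ← map_sum]
  congr 2
  rw [prod_pairs (fun i j => ((c j : ℚ) - (c i : ℚ))), vand_ffac (fun i => ((c i : ℕ) : ℚ)),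
    Finset.mul_sum]
  refine Finset.sum_congr rfl fun σ _ => ?_
  simp only [ffac_natCast]
  ring
end

section
/- The coefficient of the monomial ∏_{i=1}^k x_i^{n_i} in the polynomial ∏_{1≤i<j≤k}(x_j - x_i) · (x_1+...+x_k)^n equals (n!/∏_i n_i!) · ∏_{i<j}(n_j - n_i), whenever n_1,...,n_k are nonnegative integers with ∑ n_i = n + k(k-1)/2. -/
open MvPolynomial Finset

lemma prod_pairs_aux {k : ℕ} {M : Type*} [CommMonoid M] (f : Fin k → Fin k → M) :
    ∏ p ∈ Finset.univ.filter (fun p : Fin k × Fin k => p.1 < p.2), f p.1 p.2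
      = ∏ i, ∏ j ∈ Finset.Ioi i, f i j := by
  rw [Finset.prod_sigma']
  exact Finset.prod_nbij' (fun p => ⟨p.1, p.2⟩) (fun x => (x.1, x.2))
    (by simp) (by simp) (by simp) (by simp) (by simp)

lemma vdm_expand_aux {R : Type*} [CommRing R] {k : ℕ} (v : Fin k → R) :
    ∏ i, ∏ j ∈ Finset.Ioi i, (v j - v i)
      = ∑ σ : Equiv.Perm (Fin k), Equiv.Perm.sign σ • ∏ i, v i ^ (σ i : ℕ) := by
  rw [← Matrix.det_vandermonde, ← Matrix.det_transpose, Matrix.det_apply]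
  simp [Matrix.vandermonde]

lemma det_desc_aux {k : ℕ} (c : Fin k → ℕ) :
    ∏ i, ∏ j ∈ Finset.Ioi i, ((c j : ℚ) - (c i : ℚ))
      = ∑ σ : Equiv.Perm (Fin k),
          Equiv.Perm.sign σ • ∏ i, ((c i).descFactorial (σ i) : ℚ) := by
  rw [← Matrix.det_vandermonde,
    Matrix.det_eval_matrixOfPolynomials_eq_det_vandermonde _ (fun j => descPochhammer ℚ j)
      (fun i => descPochhammer_natDegree _ _) (fun i => monic_descPochhammer _ _),
    ← Matrix.det_transpose, Matrix.det_apply]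
  simp [descPochhammer_eval_eq_descFactorial]

lemma prod_X_pow_univ_aux {k : ℕ} (d : Fin k → ℕ) :
    (∏ i, (X i : MvPolynomial (Fin k) ℚ) ^ d i)
      = monomial (Finsupp.equivFunOnFinite.symm d) 1 := by
  rw [← prod_X_pow_eq_monomial]
  apply (Finset.prod_subset (Finset.subset_univ _) ?_).symm
  intro i _ hi
  simp only [Finsupp.mem_support_iff, not_not] at hi
  simp [Finsupp.equivFunOnFinite] at hi ⊢
  simp [show d i = 0 from hi]

lemma coeff_sum_X_pow_aux {k n : ℕ} (m : Fin k →₀ ℕ) :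
    MvPolynomial.coeff m ((∑ i : Fin k, X i) ^ n : MvPolynomial (Fin k) ℚ)
      = if ∑ i, m i = n then (Nat.multinomial Finset.univ m : ℚ) else 0 := by
  classical
  rw [Finset.sum_pow_eq_sum_piAntidiag, MvPolynomial.coeff_sum]
  have h2 : ∀ d : Fin k → ℕ,
      MvPolynomial.coeff m ((Nat.multinomial Finset.univ d : MvPolynomial (Fin k) ℚ)
          * ∏ i, (X i : MvPolynomial (Fin k) ℚ) ^ d i)
        = if d = ⇑m then (Nat.multinomial Finset.univ d : ℚ) else 0 := by
    intro d
    rw [prod_X_pow_univ_aux, ← MvPolynomial.C_eq_coe_nat, C_mul_monomial, mul_one,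
      coeff_monomial]
    congr 1
    rw [eq_iff_iff, Equiv.symm_apply_eq]
    exact ⟨fun h => h ▸ rfl, fun h => funext fun i => congrFun h i⟩
  simp_rw [h2]
  rw [Finset.sum_ite_eq' (Finset.piAntidiag Finset.univ n) (⇑m)
    (fun d => (Nat.multinomial Finset.univ d : ℚ))]
  simp [Finset.mem_piAntidiag]

/-- The coefficient of `∏ᵢ xᵢ^{nᵢ}` in `∏_{i<j}(x_j - x_i) · (x₁+⋯+x_k)^n` equals
`(n!/∏ nᵢ!) · ∏_{i<j}(n_j - n_i)`, when `∑ nᵢ = n + k(k-1)/2`. -/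
theorem stmt_7 (k n : ℕ) (hk : 0 < k) (c : Fin k → ℕ)
    (hc : ∑ i, c i = n + k * (k - 1) / 2) :
    MvPolynomial.coeff (Finsupp.equivFunOnFinite.symm c)
        ((∏ p ∈ Finset.univ.filter (fun p : Fin k × Fin k => p.1 < p.2), (X p.2 - X p.1)) *
          (∑ i : Fin k, X i) ^ n : MvPolynomial (Fin k) ℚ) =
      (n.factorial : ℚ) / (∏ i, ((c i).factorial : ℚ)) *
        ∏ p ∈ Finset.univ.filter (fun p : Fin k × Fin k => p.1 < p.2),
          ((c p.2 : ℚ) - (c p.1 : ℚ)) := by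
  classical
  have hg : ∑ i : Fin k, (i : ℕ) = k * (k - 1) / 2 := by
    rw [Fin.sum_univ_eq_sum_range (fun i => i) k]
    exact Finset.sum_range_id k
  set m : Fin k →₀ ℕ := Finsupp.equivFunOnFinite.symm c with hm
  rw [prod_pairs_aux (fun i j => (X j - X i : MvPolynomial (Fin k) ℚ)),
      prod_pairs_aux (fun i j => ((c j : ℚ) - (c i : ℚ))),
      vdm_expand_aux (fun i => (X i : MvPolynomial (Fin k) ℚ)), Finset.sum_mul,
      MvPolynomial.coeff_sum, det_desc_aux c, Finset.mul_sum]
  refine Finset.sum_congr rfl fun σ _ => ?_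
  have hσs : ∑ i, ((σ i : ℕ)) = k * (k - 1) / 2 := by
    rw [Equiv.sum_comp σ (fun i : Fin k => (i : ℕ))]; exact hg
  set d : Fin k →₀ ℕ := Finsupp.equivFunOnFinite.symm (fun i => ((σ i : ℕ))) with hd
  rw [smul_mul_assoc, MvPolynomial.coeff_smul, prod_X_pow_univ_aux,
    MvPolynomial.coeff_monomial_mul', coeff_sum_X_pow_aux]
  rw [Units.smul_def, Units.smul_def, zsmul_eq_mul, zsmul_eq_mul]
  simp only [← hd]
  by_cases h : ∀ i, (σ i : ℕ) ≤ c i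
  · have hle : d ≤ m := by
      rw [Finsupp.le_def]; intro i; exact h i
    have hsub : ∀ i, (m - d) i = c i - (σ i : ℕ) := fun i => by
      rw [Finsupp.tsub_apply]; rfl
    have hsum : ∑ i, (m - d) i = n := by
      simp_rw [hsub]
      rw [Finset.sum_tsub_distrib _ (fun i _ => h i)]
      have : ∑ i, c i - ∑ i, (σ i : ℕ) = n := by omega
      simpa [hσs] using this
    rw [if_pos hle, if_pos hsum, one_mul]
    -- pure arithmetic now
    have hfac0 : (∏ i, ((c i).factorial : ℚ)) ≠ 0 :=
      Finset.prod_ne_zero_iff.2 fun i _ => Nat.cast_ne_zero.2 (Nat.factorial_ne_zero _)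
    have spec := Nat.multinomial_spec Finset.univ (⇑(m - d))
    rw [hsum] at spec
    have e1 : (∏ i, (((c i - (σ i : ℕ)).factorial : ℚ)))
        * (Nat.multinomial Finset.univ (⇑(m - d)) : ℚ) = (n.factorial : ℚ) := by
      have := congrArg (Nat.cast : ℕ → ℚ) spec
      push_cast at this
      simpa [hsub, hm, hd] using this
    have e2 : ∀ i, ((c i).descFactorial (σ i) : ℚ) =
        ((c i).factorial : ℚ) / ((c i - (σ i : ℕ)).factorial : ℚ) := by
      intro i
      have := Nat.factorial_mul_descFactorial (h i)
      have := congrArg (Nat.cast : ℕ → ℚ) this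
      push_cast at this
      field_simp
      linarith [this]
    rw [mul_comm ((n.factorial : ℚ) / _)]
    rw [mul_assoc]
    congr 1
    simp_rw [e2]
    have hfacsub : (∏ i, (((c i - (σ i : ℕ)).factorial : ℚ))) ≠ 0 :=
      Finset.prod_ne_zero_iff.2 fun i _ => Nat.cast_ne_zero.2 (Nat.factorial_ne_zero _)
    rw [Finset.prod_div_distrib, div_mul_div_comm,
      eq_div_iff (mul_ne_zero hfacsub hfac0), ← e1]
    ring
  · push_neg at h
    obtain ⟨i0, hi0⟩ := h
    have hdesc : (c i0).descFactorial (σ i0) = 0 :=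
      Nat.descFactorial_eq_zero_iff_lt.2 hi0
    have hnle : ¬ d ≤ m := by
      intro hle
      exact absurd (Finsupp.le_def.1 hle i0) (by simpa [hm, hd] using Nat.not_le.2 hi0)
    have hz : (∏ i, (((c i).descFactorial (σ i) : ℚ))) = 0 :=
      Finset.prod_eq_zero (Finset.mem_univ i0) (by exact_mod_cast hdesc)
    rw [if_neg hnle, hz]
    ring
end

section
/- Let λ be a Young diagram with exactly k nonempty rows of lengths λ_1 ≤ λ_2 ≤ ... ≤ λ_k (from top), and set n_i = λ_i + (i-1), so n_1 < n_2 < ... < n_k are the hook lengths of the cells in the first column. Then the product of the hook lengths of all cells of λ equals (∏_{i=1}^k n_i!) / ∏_{1≤i<j≤k}(n_j - n_i). -/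
open Finset

/-- For a Young diagram with rows (from top) of lengths `λ 0 ≤ λ 1 ≤ ⋯ ≤ λ (k-1)` (all
nonempty), the hook length of the cell in row `i`, column `j` (`0 ≤ j < λ i`): the cell
itself, the `λ i - 1 - j` cells to its right, and the cells above it in its column. -/
def hookLen (k : ℕ) (lam : Fin k → ℕ) (i : Fin k) (j : ℕ) : ℕ :=
  (lam i - j) + (Finset.univ.filter (fun i' : Fin k => i' < i ∧ j < lam i')).card

lemma prod_Icc_one_id (n : ℕ) : ∏ x ∈ Icc 1 n, x = n.factorial := by
  induction n with
  | zero => simp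
  | succ n ih =>
    rw [show Icc 1 (n + 1) = insert (n + 1) (Icc 1 n) from by
        ext x; simp [Finset.mem_Icc, Finset.mem_insert]; omega,
      Finset.prod_insert (by simp), ih, Nat.factorial_succ]

lemma card_filter_lt {k : ℕ} (i : Fin k) :
    (univ.filter (fun m : Fin k => m < i)).card = i := by
  rw [show (univ.filter (fun m : Fin k => m < i)) = Iio i from by ext m; simp, Fin.card_Iio]

/-- The cross inequality: a hook length in row `i` is never equal to `nᵢ - nᵢ'`. -/
lemma cross_ne {k : ℕ} (lam : Fin k → ℕ) (hmono : Monotone lam) (i : Fin k)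
    (j : ℕ) (hj : j < lam i) (i' : Fin k) (hi' : i' < i) :
    hookLen k lam i j ≠ (lam i + i) - (lam i' + i') := by
  unfold hookLen
  set c := (univ.filter (fun m : Fin k => m < i ∧ j < lam m)).card with hc
  have hli' : lam i' ≤ lam i := hmono hi'.le
  have hii' : (i' : ℕ) < (i : ℕ) := hi'
  rcases le_or_gt (lam i') j with h | h
  · -- count of m < i with lam m ≤ j is at least i' + 1
    set t := (univ.filter (fun m : Fin k => m < i ∧ lam m ≤ j)).card with ht
    have hct : c + t = (i : ℕ) := by
      have := Finset.card_filter_add_card_filter_not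
        (s := univ.filter (fun m : Fin k => m < i)) (p := fun m => j < lam m)
      rw [Finset.filter_filter, Finset.filter_filter, card_filter_lt] at this
      rw [hc, ht]
      convert this using 3 <;> · ext m; constructor <;> · intro h; simp at h ⊢; omega
    have htge : (i' : ℕ) + 1 ≤ t := by
      have hsub : (univ.filter (fun m : Fin k => m ≤ i')) ⊆
          (univ.filter (fun m : Fin k => m < i ∧ lam m ≤ j)) := by
        intro m hm
        simp only [Finset.mem_filter, Finset.mem_univ, true_and] at hm ⊢
        exact ⟨lt_of_le_of_lt hm hi', le_trans (hmono hm) h⟩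
      have := Finset.card_le_card hsub
      rwa [show (univ.filter (fun m : Fin k => m ≤ i')) = Iic i' from by ext m; simp,
        Fin.card_Iic] at this
    omega
  · -- count of m < i with j < lam m is at least i - i'
    have hcge : (i : ℕ) - (i' : ℕ) ≤ c := by
      have hsub : (univ.filter (fun m : Fin k => i' ≤ m ∧ m < i)) ⊆
          (univ.filter (fun m : Fin k => m < i ∧ j < lam m)) := by
        intro m hm
        simp only [Finset.mem_filter, Finset.mem_univ, true_and] at hm ⊢
        exact ⟨hm.2, lt_of_lt_of_le h (hmono hm.1)⟩
      have := Finset.card_le_card hsub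
      rwa [show (univ.filter (fun m : Fin k => i' ≤ m ∧ m < i)) = Ico i' i from by
        ext m; simp, Fin.card_Ico] at this
    omega

/-- The row identity: `nᵢ! = (∏ hooks ∈ row i) * ∏_{i' < i} (nᵢ - nᵢ')`. -/
lemma row_eq {k : ℕ} (lam : Fin k → ℕ) (hmono : Monotone lam) (hpos : ∀ i, 0 < lam i)
    (i : Fin k) :
    (lam i + i).factorial =
      (∏ j ∈ Finset.range (lam i), hookLen k lam i j) *
        ∏ i' ∈ univ.filter (fun m : Fin k => m < i), ((lam i + i) - (lam i' + i')) := by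
  set n := lam i + (i : ℕ) with hn
  set A := (Finset.range (lam i)).image (hookLen k lam i) with hA
  set B := (univ.filter (fun m : Fin k => m < i)).image
      (fun i' : Fin k => n - (lam i' + (i' : ℕ))) with hB
  have hhook_anti : ∀ j1 ∈ Finset.range (lam i), ∀ j2 ∈ Finset.range (lam i),
      j1 < j2 → hookLen k lam i j2 < hookLen k lam i j1 := by
    intro j1 _ j2 h2 h12
    simp only [Finset.mem_range] at h2
    unfold hookLen
    have hsub : (univ.filter (fun m : Fin k => m < i ∧ j2 < lam m)) ⊆
        (univ.filter (fun m : Fin k => m < i ∧ j1 < lam m)) := by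
      intro m hm
      simp only [Finset.mem_filter, Finset.mem_univ, true_and] at hm ⊢
      exact ⟨hm.1, h12.trans hm.2⟩
    have := Finset.card_le_card hsub
    omega
  have hAinj : ∀ x ∈ Finset.range (lam i), ∀ y ∈ Finset.range (lam i),
      hookLen k lam i x = hookLen k lam i y → x = y := by
    intro x hx y hy hxy
    rcases lt_trichotomy x y with h | h | h
    · exact absurd hxy (by have := hhook_anti x hx y hy h; omega)
    · exact h
    · exact absurd hxy (by have := hhook_anti y hy x hx h; omega)
  have hnlt : ∀ i' : Fin k, i' < i → lam i' + (i' : ℕ) < n := by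
    intro i' hi'
    have := hmono hi'.le
    have : (i' : ℕ) < (i : ℕ) := hi'
    omega
  have hBinj : ∀ x ∈ univ.filter (fun m : Fin k => m < i),
      ∀ y ∈ univ.filter (fun m : Fin k => m < i),
      n - (lam x + (x : ℕ)) = n - (lam y + (y : ℕ)) → x = y := by
    intro x hx y hy hxy
    simp only [Finset.mem_filter, Finset.mem_univ, true_and] at hx hy
    have h1 := hnlt x hx
    have h2 := hnlt y hy
    have hxyn : lam x + (x : ℕ) = lam y + (y : ℕ) := by omega
    rcases lt_trichotomy x y with h | h | h
    · have := hnlt x (h.trans hy); have hm := hmono h.le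
      have : (x : ℕ) < (y : ℕ) := h; omega
    · exact h
    · have hm := hmono h.le; have : (y : ℕ) < (x : ℕ) := h; omega
  have hdisj : Disjoint A B := by
    rw [Finset.disjoint_left]
    intro a ha hb
    rw [hA, Finset.mem_image] at ha
    rw [hB, Finset.mem_image] at hb
    obtain ⟨j, hj, rfl⟩ := ha
    obtain ⟨i', hi', heq⟩ := hb
    simp only [Finset.mem_range] at hj
    simp only [Finset.mem_filter, Finset.mem_univ, true_and] at hi'
    exact cross_ne lam hmono i j hj i' hi' heq.symm
  have hsub : A ∪ B ⊆ Icc 1 n := by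
    intro a ha
    rw [Finset.mem_union] at ha
    rw [Finset.mem_Icc]
    rcases ha with ha | ha
    · rw [hA, Finset.mem_image] at ha
      obtain ⟨j, hj, rfl⟩ := ha
      simp only [Finset.mem_range] at hj
      unfold hookLen
      have hcle : (univ.filter (fun m : Fin k => m < i ∧ j < lam m)).card ≤ (i : ℕ) := by
        have hsub2 : (univ.filter (fun m : Fin k => m < i ∧ j < lam m)) ⊆
            (univ.filter (fun m : Fin k => m < i)) := by
          intro m hm; simp only [Finset.mem_filter, Finset.mem_univ, true_and] at hm ⊢
          exact hm.1
        have := Finset.card_le_card hsub2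
        rwa [card_filter_lt] at this
      omega
    · rw [hB, Finset.mem_image] at ha
      obtain ⟨i', hi', rfl⟩ := ha
      simp only [Finset.mem_filter, Finset.mem_univ, true_and] at hi'
      have := hnlt i' hi'
      omega
  have hcardA : A.card = lam i := by
    rw [hA, Finset.card_image_of_injOn (fun x hx y hy => hAinj x hx y hy), Finset.card_range]
  have hcardB : B.card = (i : ℕ) := by
    rw [hB, Finset.card_image_of_injOn (fun x hx y hy => hBinj x hx y hy), card_filter_lt]
  have hcard : (A ∪ B).card = n := by
    rw [Finset.card_union_of_disjoint hdisj, hcardA, hcardB]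
  have heq : A ∪ B = Icc 1 n := by
    apply Finset.eq_of_subset_of_card_le hsub
    rw [Nat.card_Icc, hcard]; omega
  have hfact : n.factorial = ∏ x ∈ A ∪ B, x := by
    rw [heq, prod_Icc_one_id]
  rw [hn] at hfact ⊢
  rw [hfact, Finset.prod_union hdisj, hA, hB,
    Finset.prod_image (fun x hx y hy => hAinj x hx y hy),
    Finset.prod_image (fun x hx y hy => hBinj x hx y hy)]

/-- With `nᵢ = λᵢ + (i-1)` the first-column hook lengths, the product of all hook lengths
of the diagram equals `(∏ nᵢ!) / ∏_{i<j} (n_j - n_i)`. -/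
theorem stmt_9 (k : ℕ) (hk : 0 < k) (lam : Fin k → ℕ) (hmono : Monotone lam)
    (hpos : ∀ i, 0 < lam i) :
    (∏ i : Fin k, ∏ j ∈ Finset.range (lam i), (hookLen k lam i j : ℚ)) =
      (∏ i : Fin k, ((lam i + (i : ℕ)).factorial : ℚ)) /
        ∏ p ∈ Finset.univ.filter (fun p : Fin k × Fin k => p.1 < p.2),
          (((lam p.2 + (p.2 : ℕ)) : ℚ) - ((lam p.1 + (p.1 : ℕ)) : ℚ)) := by
  have hnlt : ∀ i' i : Fin k, i' < i → lam i' + (i' : ℕ) < lam i + (i : ℕ) := by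
    intro i' i hi'
    have := hmono hi'.le
    have : (i' : ℕ) < (i : ℕ) := hi'
    omega
  -- rewrite the pair product as a double product
  have hpair : (∏ p ∈ Finset.univ.filter (fun p : Fin k × Fin k => p.1 < p.2),
          (((lam p.2 + (p.2 : ℕ)) : ℚ) - ((lam p.1 + (p.1 : ℕ)) : ℚ)))
      = ∏ i : Fin k, ∏ i' ∈ univ.filter (fun m : Fin k => m < i),
          (((lam i + (i : ℕ)) - (lam i' + (i' : ℕ)) : ℕ) : ℚ) := by
    rw [Finset.prod_filter]
    rw [Fintype.prod_prod_type, Finset.prod_comm]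
    apply Finset.prod_congr rfl
    intro i _
    rw [Finset.prod_filter]
    apply Finset.prod_congr rfl
    intro i' _
    by_cases h : i' < i
    · simp only [h, if_true]
      rw [Nat.cast_sub (hnlt i' i h).le]
      push_cast
      ring
    · simp [h]
  rw [hpair]
  have hDpos : ∀ i : Fin k, (0 : ℚ) < ∏ i' ∈ univ.filter (fun m : Fin k => m < i),
      (((lam i + (i : ℕ)) - (lam i' + (i' : ℕ)) : ℕ) : ℚ) := by
    intro i
    apply Finset.prod_pos
    intro i' hi'
    simp only [Finset.mem_filter, Finset.mem_univ, true_and] at hi'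
    have := hnlt i' i hi'
    have : 0 < (lam i + (i : ℕ)) - (lam i' + (i' : ℕ)) := by omega
    exact_mod_cast this
  rw [eq_div_iff (ne_of_gt (Finset.prod_pos fun i _ => hDpos i))]
  rw [← Finset.prod_mul_distrib]
  apply Finset.prod_congr rfl
  intro i _
  have := row_eq lam hmono hpos i
  have hcast : ((lam i + (i : ℕ)).factorial : ℚ) =
      ((∏ j ∈ Finset.range (lam i), hookLen k lam i j) *
        ∏ i' ∈ univ.filter (fun m : Fin k => m < i), ((lam i + i) - (lam i' + i')) : ℕ) := by
    exact_mod_cast congrArg (Nat.cast : ℕ → ℚ) this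
  rw [hcast]
  push_cast
  ring
end

section
/- Hook length formula: the number of standard Young tableaux of a given shape λ with n cells equals n! divided by the product of the hook lengths h(□) over all cells □ of λ. -/
open Finset

/-- The hook length of the cell `(i, j)` of a Young diagram `μ` (arm + leg + 1). -/
def hookLength (μ : YoungDiagram) (i j : ℕ) : ℕ :=
  (μ.rowLen i - j) + (μ.colLen j - i) - 1

/-- A standard Young tableau of shape `μ` with `n = μ.card` cells: a filling of the cells
with the numbers `1, …, n`, each used exactly once, strictly increasing along rows and
columns (and `0` outside the diagram, to fix the values off the shape). -/
def SYT (μ : YoungDiagram) (n : ℕ) : Type :=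
  { T : ℕ × ℕ → ℕ //
      Set.BijOn T (μ : Set (ℕ × ℕ)) (Set.Icc 1 n) ∧
      (∀ i j : ℕ, (i, j + 1) ∈ μ → T (i, j) < T (i, j + 1)) ∧
      (∀ i j : ℕ, (i + 1, j) ∈ μ → T (i, j) < T (i + 1, j)) ∧
      (∀ c : ℕ × ℕ, c ∉ μ → T c = 0) }

section HookAuxAlgebra
open Polynomial


variable {ι : Type*} [DecidableEq ι]

/-- Partial fractions: for a polynomial of degree `< #s`, the weighted sum of its values at
the nodes recovers its top coefficient. -/
lemma pf_coeff (s : Finset ι) (v : ι → ℚ) (hv : Set.InjOn v s) (f : ℚ[X])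
    (hdeg : f.degree < #s) :
    ∑ i ∈ s, f.eval (v i) * ∏ j ∈ s.erase i, (v i - v j)⁻¹ = f.coeff (#s - 1) := by
  have hrepr := Lagrange.eq_interpolate hv hdeg
  conv_rhs => rw [hrepr]
  rw [Lagrange.interpolate_apply, finset_sum_coeff]
  refine Finset.sum_congr rfl fun i hi => ?_
  rw [Polynomial.coeff_C_mul]
  have hb : Lagrange.basis s v i
      = C (Lagrange.nodalWeight s v i) * Lagrange.nodal (s.erase i) v := by
    rw [Lagrange.basis_eq_prod_sub_inv_mul_nodal_div hi, Lagrange.nodal_erase_eq_nodal_div hi]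
  have hmonic : (Lagrange.nodal (s.erase i) v).Monic := Lagrange.nodal_monic
  have hdeg' : (Lagrange.nodal (s.erase i) v).natDegree = #s - 1 := by
    rw [Lagrange.natDegree_nodal, card_erase_of_mem hi]
  rw [hb, Polynomial.coeff_C_mul, ← hdeg', hmonic.coeff_natDegree, mul_one,
    Lagrange.nodalWeight]

noncomputable def Gpoly (s : Finset ι) (v : ι → ℚ) : ℚ[X] :=
  X * ∏ j ∈ s, (X - C (v j + 1)) - (X - C (#s : ℚ)) * ∏ j ∈ s, (X - C (v j))

lemma Gpoly_insert (s : Finset ι) (v : ι → ℚ) (a : ι) (ha : a ∉ s) :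
    Gpoly (insert a s) v =
      Gpoly s v * (X - C (v a + 1)) + C ((#s : ℚ) - v a) * ∏ j ∈ s, (X - C (v j)) := by
  rw [Gpoly, Gpoly, prod_insert ha, prod_insert ha, card_insert_of_notMem ha]
  simp only [C_add, C_1, Nat.cast_add, Nat.cast_one, C_sub]
  ring

lemma Gpoly_degree (s : Finset ι) (v : ι → ℚ) : (Gpoly s v).degree < (#s : ℕ) := by
  classical
  induction s using Finset.induction_on with
  | empty =>
    simp only [Gpoly, prod_empty, card_empty]
    norm_num
  | @insert a s ha ih =>
    rw [Gpoly_insert s v a ha, card_insert_of_notMem ha]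
    refine lt_of_le_of_lt (degree_add_le _ _) (max_lt ?_ ?_)
    · calc (Gpoly s v * (X - C (v a + 1))).degree ≤ (Gpoly s v).degree + (X - C (v a + 1)).degree :=
            degree_mul_le _ _
        _ < (#s : ℕ) + 1 := by
            rw [degree_X_sub_C]
            rcases eq_or_ne (Gpoly s v) 0 with h | h
            · simp [h]
            · have := ih
              rw [degree_eq_natDegree h] at this ⊢
              norm_cast at this ⊢
              omega
        _ = ((#s + 1 : ℕ) : WithBot ℕ) := by push_cast; rfl
    · calc (C ((#s : ℚ) - v a) * ∏ j ∈ s, (X - C (v j))).degree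
          ≤ (C ((#s : ℚ) - v a)).degree + (∏ j ∈ s, (X - C (v j))).degree := degree_mul_le _ _
        _ ≤ 0 + (#s : ℕ) := by
            refine add_le_add degree_C_le ?_
            rw [← Lagrange.nodal_eq, Lagrange.degree_nodal]
        _ < ((#s + 1 : ℕ) : WithBot ℕ) := by
            rw [zero_add]
            norm_cast
            omega

lemma Gpoly_coeff (s : Finset ι) (v : ι → ℚ) :
    (Gpoly s v).coeff (#s - 1) = ((#s).choose 2 : ℚ) - ∑ j ∈ s, v j := by
  classical
  induction s using Finset.induction_on with
  | empty => simp [Gpoly]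
  | @insert a s ha ih =>
    rw [Gpoly_insert s v a ha, card_insert_of_notMem ha, sum_insert ha]
    have hD : (∏ j ∈ s, (X - C (v j))).coeff #s = 1 := by
      have hmonic : (Lagrange.nodal s v).Monic := Lagrange.nodal_monic
      have : (Lagrange.nodal s v).natDegree = #s := Lagrange.natDegree_nodal
      rw [← Lagrange.nodal_eq, ← this, hmonic.coeff_natDegree]
    rw [Nat.add_sub_cancel, coeff_add, coeff_C_mul, hD, mul_one]
    rcases Nat.eq_zero_or_pos #s with h0 | hpos
    · have hs : s = ∅ := card_eq_zero.mp h0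
      subst hs
      simp [Gpoly]
    · obtain ⟨k, hk⟩ : ∃ k, #s = k + 1 := ⟨#s - 1, by omega⟩
      have hGtop : (Gpoly s v).coeff #s = 0 := by
        apply coeff_eq_zero_of_degree_lt (Gpoly_degree s v)
      have hmul : (Gpoly s v * (X - C (v a + 1))).coeff #s
          = (Gpoly s v).coeff (#s - 1) := by
        rw [hk] at hGtop ⊢
        rw [mul_sub, coeff_sub, coeff_mul_X, coeff_mul_C, hGtop, Nat.add_sub_cancel]
        ring
      rw [hmul, ih]
      have hch : ((#s + 1).choose 2 : ℕ) = ((#s).choose 2 : ℕ) + #s := by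
        have h2 := Nat.choose_succ_succ (k + 1) 1
        rw [Nat.choose_one_right] at h2
        norm_num at h2
        rw [hk]
        omega
      rw [hch]
      push_cast
      ring

/-- The key rational identity behind the hook length recurrence. -/
lemma crux_identity (s : Finset ι) (v : ι → ℚ) (hv : Set.InjOn v s) :
    ∑ r ∈ s, v r * ∏ j ∈ s.erase r, ((v r - v j - 1) / (v r - v j))
      = (∑ r ∈ s, v r) - ((#s).choose 2 : ℚ) := by
  classical
  rcases s.eq_empty_or_nonempty with rfl | hs
  · simp
  have hpf := pf_coeff s v hv (Gpoly s v) (Gpoly_degree s v)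
  rw [Gpoly_coeff] at hpf
  have heval : ∀ r ∈ s, (Gpoly s v).eval (v r)
      = -(v r * ∏ j ∈ s.erase r, (v r - v j - 1)) := by
    intro r hr
    rw [Gpoly]
    simp only [eval_sub, eval_mul, eval_X, eval_prod, eval_sub, eval_C]
    have h2 : ∏ j ∈ s, (v r - v j) = 0 :=
      Finset.prod_eq_zero hr (by ring)
    have h1 : ∏ j ∈ s, (v r - (v j + 1))
        = -(∏ j ∈ s.erase r, (v r - v j - 1)) := by
      rw [← Finset.mul_prod_erase s (fun j => v r - (v j + 1)) hr,
        Finset.prod_congr rfl (fun j _ => by ring : ∀ j ∈ s.erase r,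
          v r - (v j + 1) = v r - v j - 1)]
      ring
    rw [h1, h2]
    ring
  calc ∑ r ∈ s, v r * ∏ j ∈ s.erase r, ((v r - v j - 1) / (v r - v j))
      = -∑ r ∈ s, (Gpoly s v).eval (v r) * ∏ j ∈ s.erase r, (v r - v j)⁻¹ := by
        rw [← Finset.sum_neg_distrib]
        refine Finset.sum_congr rfl fun r hr => ?_
        rw [heval r hr]
        rw [Finset.prod_div_distrib, Finset.prod_inv_distrib]
        ring
    _ = (∑ r ∈ s, v r) - ((#s).choose 2 : ℚ) := by rw [hpf]; ring

end HookAuxAlgebra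



namespace HookAux

/-- The shifted first-column hook lengths `l i = μ_i + (M - 1 - i)`. -/
def Lfun (μ : YoungDiagram) (M i : ℕ) : ℕ := μ.rowLen i + (M - 1 - i)

lemma L_strict (μ : YoungDiagram) (M : ℕ) {i j : ℕ} (hij : i < j) (hj : j < M) :
    Lfun μ M j < Lfun μ M i := by
  have h := μ.rowLen_anti i j (le_of_lt hij)
  simp only [Lfun]
  omega

lemma hook_pos {μ : YoungDiagram} {i j : ℕ} (h : (i, j) ∈ μ) : 1 ≤ hookLength μ i j := by
  have h1 : j < μ.rowLen i := YoungDiagram.mem_iff_lt_rowLen.mp h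
  have h2 : i < μ.colLen j := YoungDiagram.mem_iff_lt_colLen.mp h
  simp only [hookLength]
  omega

lemma hook_lt {μ : YoungDiagram} {i j j' : ℕ} (hjj : j < j') (hj' : j' < μ.rowLen i) :
    hookLength μ i j' < hookLength μ i j := by
  have h1 : μ.colLen j' ≤ μ.colLen j := μ.colLen_anti j j' (le_of_lt hjj)
  have h2 : i < μ.colLen j' :=
    YoungDiagram.mem_iff_lt_colLen.mp (YoungDiagram.mem_iff_lt_rowLen.mpr hj')
  simp only [hookLength]
  omega

lemma row_hook_prod (μ : YoungDiagram) (M : ℕ) (hM : μ.colLen 0 ≤ M) {i : ℕ} (hi : i < M) :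
    (∏ j ∈ range (μ.rowLen i), hookLength μ i j) *
      ∏ k ∈ Ioo i M, (Lfun μ M i - Lfun μ M k) = (Lfun μ M i).factorial := by
  classical
  have hinjA : Set.InjOn (hookLength μ i) (range (μ.rowLen i)) := by
    intro a ha b hb hab
    simp only [coe_range, Set.mem_Iio] at ha hb
    rcases lt_trichotomy a b with h | h | h
    · exact absurd hab (hook_lt h hb).ne'
    · exact h
    · exact absurd hab (hook_lt h ha).ne
  have hinjB : Set.InjOn (fun k => Lfun μ M i - Lfun μ M k) (Ioo i M) := by
    intro a ha b hb hab
    simp only [coe_Ioo, Set.mem_Ioo] at ha hb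
    have hlai : Lfun μ M a < Lfun μ M i := L_strict μ M ha.1 ha.2
    have hlbi : Lfun μ M b < Lfun μ M i := L_strict μ M hb.1 hb.2
    rcases lt_trichotomy a b with h | h | h
    · have := L_strict μ M h hb.2
      simp only at hab; omega
    · exact h
    · have := L_strict μ M h ha.2
      simp only at hab; omega
  have hsubA : (range (μ.rowLen i)).image (hookLength μ i) ⊆ Icc 1 (Lfun μ M i) := by
    intro x hx
    simp only [mem_image, mem_range] at hx
    obtain ⟨j, hj, rfl⟩ := hx
    have h2 : i < μ.colLen j :=
      YoungDiagram.mem_iff_lt_colLen.mp (YoungDiagram.mem_iff_lt_rowLen.mpr hj)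
    have h3 : μ.colLen j ≤ M := le_trans (μ.colLen_anti 0 j (Nat.zero_le j)) hM
    simp only [mem_Icc]
    constructor
    · exact hook_pos (YoungDiagram.mem_iff_lt_rowLen.mpr hj)
    · simp only [hookLength, Lfun]
      omega
  have hsubB : (Ioo i M).image (fun k => Lfun μ M i - Lfun μ M k) ⊆ Icc 1 (Lfun μ M i) := by
    intro x hx
    simp only [mem_image, mem_Ioo] at hx
    obtain ⟨k, hk, rfl⟩ := hx
    have := L_strict μ M hk.1 hk.2
    simp only [mem_Icc]
    omega
  have hdisj : Disjoint ((range (μ.rowLen i)).image (hookLength μ i))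
      ((Ioo i M).image (fun k => Lfun μ M i - Lfun μ M k)) := by
    rw [Finset.disjoint_left]
    intro x hxA hxB
    simp only [mem_image, mem_range, mem_Ioo] at hxA hxB
    obtain ⟨j, hj, rfl⟩ := hxA
    obtain ⟨k, hk, hkeq⟩ := hxB
    have h2 : i < μ.colLen j :=
      YoungDiagram.mem_iff_lt_colLen.mp (YoungDiagram.mem_iff_lt_rowLen.mpr hj)
    have h3 : μ.colLen j ≤ M := le_trans (μ.colLen_anti 0 j (Nat.zero_le j)) hM
    have h4 : μ.rowLen k ≤ μ.rowLen i := μ.rowLen_anti i k (le_of_lt hk.1)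
    by_cases hmem : (k, j) ∈ μ
    · have h5 : k < μ.colLen j := YoungDiagram.mem_iff_lt_colLen.mp hmem
      have h6 : j < μ.rowLen k := YoungDiagram.mem_iff_lt_rowLen.mp hmem
      simp only [hookLength, Lfun] at hkeq
      omega
    · have h5 : ¬ k < μ.colLen j := fun h => hmem (YoungDiagram.mem_iff_lt_colLen.mpr h)
      have h6 : ¬ j < μ.rowLen k := fun h => hmem (YoungDiagram.mem_iff_lt_rowLen.mpr h)
      simp only [hookLength, Lfun] at hkeq
      omega
  have hcardA : ((range (μ.rowLen i)).image (hookLength μ i)).card = μ.rowLen i := by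
    rw [Finset.card_image_of_injOn hinjA, card_range]
  have hcardB : ((Ioo i M).image (fun k => Lfun μ M i - Lfun μ M k)).card = M - i - 1 := by
    rw [Finset.card_image_of_injOn hinjB, Nat.card_Ioo]
  have hunion : (range (μ.rowLen i)).image (hookLength μ i)
      ∪ (Ioo i M).image (fun k => Lfun μ M i - Lfun μ M k) = Icc 1 (Lfun μ M i) := by
    apply Finset.eq_of_subset_of_card_le (Finset.union_subset hsubA hsubB)
    rw [Finset.card_union_of_disjoint hdisj, hcardA, hcardB, Nat.card_Icc]
    simp only [Lfun]
    omega
  have hfact : (Lfun μ M i).factorial = ∏ x ∈ Icc 1 (Lfun μ M i), x := by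
    rw [← Finset.Ico_add_one_right_eq_Icc, Finset.prod_Ico_id_eq_factorial]
  rw [hfact, ← hunion, Finset.prod_union hdisj,
    Finset.prod_image hinjA, Finset.prod_image hinjB]

end HookAux

namespace HookAux

lemma row_lt_of_mem {μ : YoungDiagram} {c : ℕ × ℕ} (hc : c ∈ μ) {M : ℕ}
    (hM : μ.colLen 0 ≤ M) : c.1 < M := by
  have h1 : (c.1, c.2) ∈ μ := by rwa [Prod.mk.eta]
  have h2 : c.1 < μ.colLen c.2 := YoungDiagram.mem_iff_lt_colLen.mp h1
  have h3 : μ.colLen c.2 ≤ μ.colLen 0 := μ.colLen_anti 0 c.2 (Nat.zero_le _)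
  omega

lemma cells_eq_biUnion (μ : YoungDiagram) (M : ℕ) (hM : μ.colLen 0 ≤ M) :
    μ.cells = (range M).biUnion (fun i => ({i} : Finset ℕ) ×ˢ range (μ.rowLen i)) := by
  ext c
  simp only [mem_biUnion, mem_product, mem_range, mem_singleton, YoungDiagram.mem_cells]
  constructor
  · intro hc
    exact ⟨c.1, row_lt_of_mem hc hM, rfl,
      YoungDiagram.mem_iff_lt_rowLen.mp (by rwa [Prod.mk.eta])⟩
  · rintro ⟨i, hiM, hk, hj⟩
    have : (c.1, c.2) ∈ μ := YoungDiagram.mem_iff_lt_rowLen.mpr (hk ▸ hj)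
    rwa [Prod.mk.eta] at this

lemma prod_cells {β : Type*} [CommMonoid β] (μ : YoungDiagram) (M : ℕ)
    (hM : μ.colLen 0 ≤ M) (f : ℕ × ℕ → β) :
    ∏ c ∈ μ.cells, f c = ∏ i ∈ range M, ∏ j ∈ range (μ.rowLen i), f (i, j) := by
  rw [cells_eq_biUnion μ M hM, Finset.prod_biUnion]
  · refine Finset.prod_congr rfl fun i _ => ?_
    rw [Finset.singleton_product, Finset.prod_map]
    rfl
  · intro a _ b _ hab
    simp only [Finset.disjoint_left, mem_product, mem_singleton]
    rintro ⟨x, y⟩ ⟨hx, -⟩ ⟨hx', -⟩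
    exact hab (hx ▸ hx')

lemma card_eq_sum_rowLens (μ : YoungDiagram) (M : ℕ) (hM : μ.colLen 0 ≤ M) :
    μ.card = ∑ i ∈ range M, μ.rowLen i := by
  show μ.cells.card = _
  rw [cells_eq_biUnion μ M hM, Finset.card_biUnion]
  · refine Finset.sum_congr rfl fun i _ => ?_
    rw [Finset.card_product, Finset.card_singleton, card_range, one_mul]
  · intro a _ b _ hab
    simp only [Finset.disjoint_left, mem_product, mem_singleton]
    rintro ⟨x, y⟩ ⟨hx, -⟩ ⟨hx', -⟩
    exact hab (hx ▸ hx')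

/-- The row-product form of the hook length product. -/
lemma hook_prod_eq (μ : YoungDiagram) (M : ℕ) (hM : μ.colLen 0 ≤ M) :
    (∏ c ∈ μ.cells, hookLength μ c.1 c.2) *
      ∏ i ∈ range M, ∏ k ∈ Ioo i M, (Lfun μ M i - Lfun μ M k)
      = ∏ i ∈ range M, (Lfun μ M i).factorial := by
  rw [prod_cells μ M hM (fun c => hookLength μ c.1 c.2), ← Finset.prod_mul_distrib]
  exact Finset.prod_congr rfl fun i hi => row_hook_prod μ M hM (mem_range.mp hi)

end HookAux


namespace HookAux

/-- Row `r` has a removable corner cell. -/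
def IsCornerRow (μ : YoungDiagram) (r : ℕ) : Prop := μ.rowLen (r + 1) < μ.rowLen r

instance (μ : YoungDiagram) (r : ℕ) : Decidable (IsCornerRow μ r) := by
  unfold IsCornerRow; infer_instance

lemma rowLen_eq_of {ν : YoungDiagram} {i t : ℕ} (h1 : ∀ j, (i, j) ∈ ν ↔ j < t) :
    ν.rowLen i = t := by
  have h2 : ∀ j, j < ν.rowLen i ↔ j < t :=
    fun j => (YoungDiagram.mem_iff_lt_rowLen).symm.trans (h1 j)
  have := h2 t
  have := h2 (ν.rowLen i)
  omega

section

variable {μ : YoungDiagram} {r : ℕ}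

lemma corner_mem (hr : IsCornerRow μ r) : (r, μ.rowLen r - 1) ∈ μ := by
  have : 0 < μ.rowLen r := by have := hr; unfold IsCornerRow at this; omega
  exact YoungDiagram.mem_iff_lt_rowLen.mpr (by omega)

lemma corner_right (hr : IsCornerRow μ r) : (r, μ.rowLen r - 1 + 1) ∉ μ := by
  have h1 : 0 < μ.rowLen r := by have := hr; unfold IsCornerRow at this; omega
  intro h
  have := YoungDiagram.mem_iff_lt_rowLen.mp h
  omega

lemma corner_below (hr : IsCornerRow μ r) : (r + 1, μ.rowLen r - 1) ∉ μ := by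
  intro h
  have h2 := YoungDiagram.mem_iff_lt_rowLen.mp h
  have := hr; unfold IsCornerRow at this
  omega

lemma cornerRow_lt (hr : IsCornerRow μ r) : r < μ.colLen 0 := by
  have h1 : 0 < μ.rowLen r := by have := hr; unfold IsCornerRow at this; omega
  have : (r, 0) ∈ μ := YoungDiagram.mem_iff_lt_rowLen.mpr h1
  exact YoungDiagram.mem_iff_lt_colLen.mp this

end

/-- Remove the corner cell at the end of row `r` (junk value `μ` if row `r` has no corner). -/
def removeCorner (μ : YoungDiagram) (r : ℕ) : YoungDiagram :=
  if h : IsCornerRow μ r then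
    { cells := μ.cells.erase (r, μ.rowLen r - 1)
      isLowerSet := by
        intro a b hba ha
        simp only [coe_erase, Set.mem_diff, Set.mem_singleton_iff, Finset.mem_coe,
          YoungDiagram.mem_cells] at ha ⊢
        obtain ⟨haμ, hane⟩ := ha
        have hbμ : b ∈ μ := μ.isLowerSet hba haμ
        refine ⟨hbμ, ?_⟩
        rintro rfl
        -- b is the corner, a ≥ b, a ∈ μ, a ≠ corner : contradiction
        have h1 : r ≤ a.1 := hba.1
        have h2 : μ.rowLen r - 1 ≤ a.2 := hba.2
        have h3 : a.2 < μ.rowLen a.1 := by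
          have : (a.1, a.2) ∈ μ := by rwa [Prod.mk.eta]
          exact YoungDiagram.mem_iff_lt_rowLen.mp this
        have h4 : μ.rowLen a.1 ≤ μ.rowLen r := μ.rowLen_anti r a.1 h1
        have h5 : 0 < μ.rowLen r := by have := h; unfold IsCornerRow at this; omega
        have ha1 : a.1 = r := by
          by_contra hne
          have h6 : μ.rowLen a.1 ≤ μ.rowLen (r + 1) := μ.rowLen_anti (r+1) a.1 (by omega)
          have := h; unfold IsCornerRow at this
          omega
        have ha2 : a.2 = μ.rowLen r - 1 := by omega
        exact hane (Prod.ext_iff.mpr ⟨ha1, ha2⟩) }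
  else μ

section

variable {μ : YoungDiagram} {r : ℕ}

lemma mem_removeCorner (hr : IsCornerRow μ r) {c : ℕ × ℕ} :
    c ∈ removeCorner μ r ↔ c ∈ μ ∧ c ≠ (r, μ.rowLen r - 1) := by
  rw [removeCorner, dif_pos hr]
  exact Finset.mem_erase.trans and_comm

lemma removeCorner_card (hr : IsCornerRow μ r) :
    (removeCorner μ r).card = μ.card - 1 := by
  show (removeCorner μ r).cells.card = μ.cells.card - 1
  rw [removeCorner, dif_pos hr]
  exact Finset.card_erase_of_mem (by rw [YoungDiagram.mem_cells]; exact corner_mem hr)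

lemma rowLen_removeCorner (hr : IsCornerRow μ r) (i : ℕ) :
    (removeCorner μ r).rowLen i = if i = r then μ.rowLen r - 1 else μ.rowLen i := by
  split_ifs with h
  · subst h
    apply rowLen_eq_of
    intro j
    rw [mem_removeCorner hr]
    have h5 : 0 < μ.rowLen i := by have := hr; unfold IsCornerRow at this; omega
    constructor
    · rintro ⟨hm, hne⟩
      have := YoungDiagram.mem_iff_lt_rowLen.mp hm
      have : j ≠ μ.rowLen i - 1 := fun hj => hne (by rw [hj])
      omega
    · intro hj
      refine ⟨YoungDiagram.mem_iff_lt_rowLen.mpr (by omega), ?_⟩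
      intro hc
      have : j = μ.rowLen i - 1 := congrArg Prod.snd hc
      omega
  · apply rowLen_eq_of
    intro j
    rw [mem_removeCorner hr]
    constructor
    · rintro ⟨hm, -⟩
      exact YoungDiagram.mem_iff_lt_rowLen.mp hm
    · intro hj
      refine ⟨YoungDiagram.mem_iff_lt_rowLen.mpr hj, ?_⟩
      intro hc
      exact h (congrArg Prod.fst hc)

lemma removeCorner_le (hr : IsCornerRow μ r) {c : ℕ × ℕ} (hc : c ∈ removeCorner μ r) :
    c ∈ μ := ((mem_removeCorner hr).mp hc).1

lemma colLen_removeCorner_le (hr : IsCornerRow μ r) :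
    (removeCorner μ r).colLen 0 ≤ μ.colLen 0 := by
  by_contra h
  push_neg at h
  have : (μ.colLen 0, 0) ∈ removeCorner μ r := YoungDiagram.mem_iff_lt_colLen.mpr h
  have := YoungDiagram.mem_iff_lt_colLen.mp (removeCorner_le hr this)
  omega

end

end HookAux


namespace HookAux

lemma pairs_split (M r : ℕ) (hr : r < M) (u : ℕ → ℚ) :
    ∏ i ∈ range M, ∏ j ∈ Ioo i M, (u i - u j)
      = ((∏ j ∈ Ioo r M, (u r - u j)) * ∏ i ∈ range r, (u i - u r)) *
        ∏ i ∈ (range M).erase r, ∏ j ∈ (Ioo i M).erase r, (u i - u j) := by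
  rw [← Finset.mul_prod_erase (range M) _ (mem_range.mpr hr)]
  have hinner : ∀ i ∈ (range M).erase r,
      ∏ j ∈ Ioo i M, (u i - u j)
        = (if i < r then u i - u r else 1) * ∏ j ∈ (Ioo i M).erase r, (u i - u j) := by
    intro i hi
    rcases mem_erase.mp hi with ⟨hne, hiM⟩
    by_cases h : i < r
    · rw [if_pos h]
      exact (Finset.mul_prod_erase (Ioo i M) _ (mem_Ioo.mpr ⟨h, hr⟩)).symm
    · rw [if_neg h, one_mul, Finset.erase_eq_of_notMem]
      rw [mem_Ioo]
      exact fun hc => h hc.1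
  rw [Finset.prod_congr rfl hinner, Finset.prod_mul_distrib]
  have hfilter : ∏ i ∈ (range M).erase r, (if i < r then u i - u r else 1)
      = ∏ i ∈ range r, (u i - u r) := by
    have h1 : range r ⊆ (range M).erase r := by
      intro x hx
      simp only [mem_erase, mem_range] at *
      omega
    rw [← Finset.prod_subset h1
      (fun x _ hx => if_neg (by simpa using hx))]
    exact Finset.prod_congr rfl fun i hi => if_pos (mem_range.mp hi)
  rw [hfilter]
  ring

lemma pairs_update (M r : ℕ) (hr : r < M) (u u' : ℕ → ℚ)
    (hu : ∀ i, i ≠ r → u' i = u i) (hur : u' r = u r - 1) :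
    (∏ i ∈ range M, ∏ j ∈ Ioo i M, (u' i - u' j)) *
        ∏ j ∈ (range M).erase r, (u r - u j)
      = (∏ i ∈ range M, ∏ j ∈ Ioo i M, (u i - u j)) *
        ∏ j ∈ (range M).erase r, (u r - u j - 1) := by
  have herase : (range M).erase r = range r ∪ Ioo r M := by
    ext x
    simp only [mem_erase, mem_range, mem_union, mem_Ioo]
    omega
  have hdisj : Disjoint (range r) (Ioo r M) := by
    rw [Finset.disjoint_left]
    intro x hx hx'
    simp only [mem_range] at hx
    simp only [mem_Ioo] at hx'
    omega
  have hsplit1 : ∏ j ∈ (range M).erase r, (u r - u j)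
      = (∏ j ∈ range r, (u r - u j)) * ∏ j ∈ Ioo r M, (u r - u j) := by
    rw [herase, Finset.prod_union hdisj]
  have hsplit2 : ∏ j ∈ (range M).erase r, (u r - u j - 1)
      = (∏ j ∈ range r, (u r - u j - 1)) * ∏ j ∈ Ioo r M, (u r - u j - 1) := by
    rw [herase, Finset.prod_union hdisj]
  have hIoo' : ∏ j ∈ Ioo r M, (u' r - u' j) = ∏ j ∈ Ioo r M, (u r - u j - 1) :=
    Finset.prod_congr rfl fun j hj => by
      rw [hu j (by have := (mem_Ioo.mp hj).1; omega), hur]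
      ring
  have hrange' : ∏ i ∈ range r, (u' i - u' r) = ∏ i ∈ range r, (u i - u r + 1) :=
    Finset.prod_congr rfl fun i hi => by
      rw [hu i (by have := mem_range.mp hi; omega), hur]
      ring
  have hR : (∏ i ∈ (range M).erase r, ∏ j ∈ (Ioo i M).erase r, (u' i - u' j))
      = ∏ i ∈ (range M).erase r, ∏ j ∈ (Ioo i M).erase r, (u i - u j) := by
    refine Finset.prod_congr rfl fun i hi => Finset.prod_congr rfl fun j hj => ?_
    rw [hu i (mem_erase.mp hi).1, hu j (mem_erase.mp hj).1]
  rw [pairs_split M r hr u', pairs_split M r hr u, hIoo', hrange', hR, hsplit1, hsplit2]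
  have key1 : (∏ i ∈ range r, (u i - u r + 1)) * ∏ i ∈ range r, (u r - u i)
      = (∏ i ∈ range r, (u i - u r)) * ∏ i ∈ range r, (u r - u i - 1) := by
    rw [← Finset.prod_mul_distrib, ← Finset.prod_mul_distrib]
    exact Finset.prod_congr rfl fun i _ => by ring
  linear_combination ((∏ j ∈ Ioo r M, (u r - u j - 1)) * (∏ j ∈ Ioo r M, (u r - u j)) *
    ∏ i ∈ (range M).erase r, ∏ j ∈ (Ioo i M).erase r, (u i - u j)) * key1

end HookAux

namespace HookAux

instance SYT_finite (μ : YoungDiagram) (n : ℕ) : Finite (SYT μ n) := by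
  classical
  let F : SYT μ n → (μ.cells → Fin (n + 1)) := fun T c =>
    ⟨T.val c.val, by
      have hc : c.val ∈ μ := (YoungDiagram.mem_cells _).mp c.property
      have := T.property.1.mapsTo hc
      simp only [Set.mem_Icc] at this
      omega⟩
  have hF : Function.Injective F := by
    intro T1 T2 h
    apply Subtype.ext
    funext x
    by_cases hx : x ∈ μ
    · have := congrFun h ⟨x, (YoungDiagram.mem_cells _).mpr hx⟩
      simpa [F, Fin.ext_iff] using this
    · rw [T1.property.2.2.2 x hx, T2.property.2.2.2 x hx]
  exact Finite.of_injective F hF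

/-- Rows of `μ` containing a removable corner cell. -/
def cornerRows (μ : YoungDiagram) : Finset ℕ :=
  (range (μ.colLen 0)).filter (fun r => IsCornerRow μ r)

lemma mem_cornerRows {μ : YoungDiagram} {r : ℕ} : r ∈ cornerRows μ ↔ IsCornerRow μ r := by
  simp only [cornerRows, mem_filter, mem_range]
  exact ⟨fun h => h.2, fun h => ⟨cornerRow_lt h, h⟩⟩

section Branch

variable {μ : YoungDiagram} {n : ℕ}

/-- Add the value `n+1` at the corner of row `r`. -/
def attach (r : ℕ) (hr : IsCornerRow μ r) (T' : SYT (removeCorner μ r) n) :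
    SYT μ (n + 1) := by
  refine ⟨Function.update T'.val (r, μ.rowLen r - 1) (n + 1), ?_, ?_, ?_, ?_⟩
  · obtain ⟨hB, hrow, hcol, hz⟩ := T'.property
    constructor
    · -- MapsTo
      intro x hx
      by_cases hxc : x = (r, μ.rowLen r - 1)
      · subst hxc
        rw [Function.update_self]
        simp only [Set.mem_Icc]
        omega
      · rw [Function.update_of_ne hxc]
        have hxν : x ∈ removeCorner μ r := (mem_removeCorner hr).mpr ⟨hx, hxc⟩
        have := hB.mapsTo hxν
        simp only [Set.mem_Icc] at this ⊢
        omega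
    constructor
    · -- InjOn
      intro x hx y hy hxy
      by_cases hxc : x = (r, μ.rowLen r - 1) <;> by_cases hyc : y = (r, μ.rowLen r - 1)
      · rw [hxc, hyc]
      · exfalso
        rw [hxc, Function.update_self, Function.update_of_ne hyc] at hxy
        have hyν : y ∈ removeCorner μ r := (mem_removeCorner hr).mpr ⟨hy, hyc⟩
        have := hB.mapsTo hyν
        simp only [Set.mem_Icc] at this
        omega
      · exfalso
        rw [hyc, Function.update_self, Function.update_of_ne hxc] at hxy
        have hxν : x ∈ removeCorner μ r := (mem_removeCorner hr).mpr ⟨hx, hxc⟩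
        have := hB.mapsTo hxν
        simp only [Set.mem_Icc] at this
        omega
      · rw [Function.update_of_ne hxc, Function.update_of_ne hyc] at hxy
        exact hB.injOn ((mem_removeCorner hr).mpr ⟨hx, hxc⟩)
          ((mem_removeCorner hr).mpr ⟨hy, hyc⟩) hxy
    · -- SurjOn
      intro y hy
      simp only [Set.mem_Icc] at hy
      by_cases hytop : y = n + 1
      · refine ⟨(r, μ.rowLen r - 1), corner_mem hr, ?_⟩
        rw [Function.update_self, hytop]
      · have hy' : y ∈ Set.Icc 1 n := by simp only [Set.mem_Icc]; omega
        obtain ⟨x, hxν, hxy⟩ := hB.surjOn hy'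
        have hxμ : x ∈ μ := removeCorner_le hr hxν
        have hxc : x ≠ (r, μ.rowLen r - 1) := ((mem_removeCorner hr).mp hxν).2
        exact ⟨x, hxμ, by rw [Function.update_of_ne hxc]; exact hxy⟩
  · -- rows
    obtain ⟨hB, hrow, hcol, hz⟩ := T'.property
    intro i j hmem
    by_cases h1 : (i, j + 1) = (r, μ.rowLen r - 1)
    · have h2 : (i, j) ≠ (r, μ.rowLen r - 1) := by
        intro hc
        rw [← h1] at hc
        have := congrArg Prod.snd hc
        simp only at this
        omega
      have h3 : (i, j) ∈ μ := μ.up_left_mem le_rfl (Nat.le_succ j) hmem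
      have h4 : (i, j) ∈ removeCorner μ r := (mem_removeCorner hr).mpr ⟨h3, h2⟩
      rw [Function.update_of_ne h2, h1, Function.update_self]
      have := hB.mapsTo h4
      simp only [Set.mem_Icc] at this
      omega
    · by_cases h2 : (i, j) = (r, μ.rowLen r - 1)
      · exfalso
        have hi : i = r := congrArg Prod.fst h2
        have hj : j = μ.rowLen r - 1 := congrArg Prod.snd h2
        rw [hi, hj] at hmem
        exact corner_right hr hmem
      · rw [Function.update_of_ne h1, Function.update_of_ne h2]
        exact hrow i j ((mem_removeCorner hr).mpr ⟨hmem, h1⟩)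
  · -- cols
    obtain ⟨hB, hrow, hcol, hz⟩ := T'.property
    intro i j hmem
    by_cases h1 : (i + 1, j) = (r, μ.rowLen r - 1)
    · have h2 : (i, j) ≠ (r, μ.rowLen r - 1) := by
        intro hc
        rw [← h1] at hc
        have := congrArg Prod.fst hc
        simp only at this
        omega
      have h3 : (i, j) ∈ μ := μ.up_left_mem (Nat.le_succ i) le_rfl hmem
      have h4 : (i, j) ∈ removeCorner μ r := (mem_removeCorner hr).mpr ⟨h3, h2⟩
      rw [Function.update_of_ne h2, h1, Function.update_self]
      have := hB.mapsTo h4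
      simp only [Set.mem_Icc] at this
      omega
    · by_cases h2 : (i, j) = (r, μ.rowLen r - 1)
      · exfalso
        have hi : i = r := congrArg Prod.fst h2
        have hj : j = μ.rowLen r - 1 := congrArg Prod.snd h2
        rw [hi, hj] at hmem
        exact corner_below hr hmem
      · rw [Function.update_of_ne h1, Function.update_of_ne h2]
        exact hcol i j ((mem_removeCorner hr).mpr ⟨hmem, h1⟩)
  · -- zero off diagram
    obtain ⟨hB, hrow, hcol, hz⟩ := T'.property
    intro x hx
    have hxc : x ≠ (r, μ.rowLen r - 1) := fun hc => hx (hc ▸ corner_mem hr)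
    rw [Function.update_of_ne hxc]
    exact hz x (fun hxν => hx (removeCorner_le hr hxν))

/-- The gluing map of the branching bijection. -/
def glue (μ : YoungDiagram) (n : ℕ)
    (p : Σ r : {r // r ∈ cornerRows μ}, SYT (removeCorner μ r.val) n) : SYT μ (n + 1) :=
  attach p.1.val (mem_cornerRows.mp p.1.property) p.2

lemma glue_bijective (μ : YoungDiagram) (n : ℕ) : Function.Bijective (glue μ n) := by
  classical
  constructor
  · -- injective
    rintro ⟨⟨r1, h1⟩, T1⟩ ⟨⟨r2, h2⟩, T2⟩ hg
    have hc1 := mem_cornerRows.mp h1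
    have hc2 := mem_cornerRows.mp h2
    have hval : Function.update T1.val (r1, μ.rowLen r1 - 1) (n + 1)
        = Function.update T2.val (r2, μ.rowLen r2 - 1) (n + 1) :=
      congrArg Subtype.val hg
    have hcc : (r1, μ.rowLen r1 - 1) = (r2, μ.rowLen r2 - 1) := by
      by_contra hne
      have := congrFun hval (r1, μ.rowLen r1 - 1)
      rw [Function.update_self, Function.update_of_ne hne] at this
      by_cases hmem : (r1, μ.rowLen r1 - 1) ∈ removeCorner μ r2
      · have := T2.property.1.mapsTo hmem
        simp only [Set.mem_Icc] at this
        omega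
      · rw [T2.property.2.2.2 _ hmem] at this
        omega
    have hrr : r1 = r2 := congrArg Prod.fst hcc
    subst hrr
    have hTT : T1 = T2 := by
      apply Subtype.ext
      funext x
      by_cases hx : x = (r1, μ.rowLen r1 - 1)
      · rw [hx, T1.property.2.2.2 _ (fun hm => ((mem_removeCorner hc1).mp hm).2 rfl),
          T2.property.2.2.2 _ (fun hm => ((mem_removeCorner hc2).mp hm).2 rfl)]
      · have := congrFun hval x
        rwa [Function.update_of_ne hx, Function.update_of_ne hx] at this
    subst hTT
    rfl
  · -- surjective
    intro T
    obtain ⟨hB, hrow, hcol, hz⟩ := T.property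
    have htop : (n + 1 : ℕ) ∈ Set.Icc 1 (n + 1) := by simp only [Set.mem_Icc]; omega
    obtain ⟨c, hcμ, hcval⟩ := hB.surjOn htop
    have hcμ' : c ∈ μ := hcμ
    have hcpair : (c.1, c.2) ∈ μ := by rwa [Prod.mk.eta]
    have hright : (c.1, c.2 + 1) ∉ μ := by
      intro hmem
      have h1 := hrow c.1 c.2 hmem
      have h2 := hB.mapsTo hmem
      simp only [Set.mem_Icc] at h2
      rw [Prod.mk.eta, hcval] at h1
      omega
    have hdown : (c.1 + 1, c.2) ∉ μ := by
      intro hmem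
      have h1 := hcol c.1 c.2 hmem
      have h2 := hB.mapsTo hmem
      simp only [Set.mem_Icc] at h2
      rw [Prod.mk.eta, hcval] at h1
      omega
    have hc2 : c.2 = μ.rowLen c.1 - 1 := by
      have ha := YoungDiagram.mem_iff_lt_rowLen.mp hcpair
      have hb : ¬ c.2 + 1 < μ.rowLen c.1 := fun h => hright (YoungDiagram.mem_iff_lt_rowLen.mpr h)
      omega
    have hcorner : IsCornerRow μ c.1 := by
      have ha := YoungDiagram.mem_iff_lt_rowLen.mp hcpair
      have hb : ¬ c.2 < μ.rowLen (c.1 + 1) := fun h => hdown (YoungDiagram.mem_iff_lt_rowLen.mpr h)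
      unfold IsCornerRow
      omega
    have hceq : c = (c.1, μ.rowLen c.1 - 1) := by
      rw [← hc2, Prod.mk.eta]
    -- build the smaller tableau
    have hT' : ∃ T' : SYT (removeCorner μ c.1) n, T'.val = Function.update T.val c 0 := by
      refine ⟨⟨Function.update T.val c 0, ?_, ?_, ?_, ?_⟩, rfl⟩
      · constructor
        · intro x hxν
          have hxμ : x ∈ μ := removeCorner_le hcorner hxν
          have hxc : x ≠ c := by
            intro h
            exact ((mem_removeCorner hcorner).mp hxν).2 (h.trans hceq)
          rw [Function.update_of_ne hxc]
          have h1 := hB.mapsTo hxμ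
          simp only [Set.mem_Icc] at h1 ⊢
          have hne : T.val x ≠ n + 1 := by
            intro h
            exact hxc (hB.injOn hxμ hcμ (h.trans hcval.symm))
          omega
        constructor
        · intro x hx y hy hxy
          have hxc : x ≠ c := fun h => ((mem_removeCorner hcorner).mp hx).2 (h.trans hceq)
          have hyc : y ≠ c := fun h => ((mem_removeCorner hcorner).mp hy).2 (h.trans hceq)
          rw [Function.update_of_ne hxc, Function.update_of_ne hyc] at hxy
          exact hB.injOn (removeCorner_le hcorner hx) (removeCorner_le hcorner hy) hxy
        · intro y hy
          simp only [Set.mem_Icc] at hy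
          have hy' : y ∈ Set.Icc 1 (n + 1) := by simp only [Set.mem_Icc]; omega
          obtain ⟨x, hxμ, hxy⟩ := hB.surjOn hy'
          have hxc : x ≠ c := by
            intro h
            rw [h, hcval] at hxy
            omega
          have hxν : x ∈ removeCorner μ c.1 := by
            rw [mem_removeCorner hcorner]
            exact ⟨hxμ, fun h => hxc (h.trans hceq.symm)⟩
          exact ⟨x, hxν, by rw [Function.update_of_ne hxc]; exact hxy⟩
      · intro i j hmem
        have hmem' : (i, j + 1) ∈ μ := removeCorner_le hcorner hmem
        have h1 : (i, j + 1) ≠ c := by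
          intro h
          exact ((mem_removeCorner hcorner).mp hmem).2 (h.trans hceq)
        have h2 : (i, j) ≠ c := by
          intro h
          apply hright
          have : c.1 = i ∧ c.2 = j := ⟨(congrArg Prod.fst h).symm, (congrArg Prod.snd h).symm⟩
          rw [this.1, this.2]
          exact hmem'
        rw [Function.update_of_ne h1, Function.update_of_ne h2]
        exact hrow i j hmem'
      · intro i j hmem
        have hmem' : (i + 1, j) ∈ μ := removeCorner_le hcorner hmem
        have h1 : (i + 1, j) ≠ c := by
          intro h
          exact ((mem_removeCorner hcorner).mp hmem).2 (h.trans hceq)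
        have h2 : (i, j) ≠ c := by
          intro h
          apply hdown
          have : c.1 = i ∧ c.2 = j := ⟨(congrArg Prod.fst h).symm, (congrArg Prod.snd h).symm⟩
          rw [this.1, this.2]
          exact hmem'
        rw [Function.update_of_ne h1, Function.update_of_ne h2]
        exact hcol i j hmem'
      · intro x hx
        by_cases hxc : x = c
        · rw [hxc, Function.update_self]
        · rw [Function.update_of_ne hxc]
          apply hz
          intro hxμ
          apply hx
          rw [mem_removeCorner hcorner]
          exact ⟨hxμ, fun h => hxc (h.trans hceq.symm)⟩
    obtain ⟨T', hT'val⟩ := hT'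
    refine ⟨⟨⟨c.1, mem_cornerRows.mpr hcorner⟩, T'⟩, ?_⟩
    apply Subtype.ext
    show Function.update T'.val (c.1, μ.rowLen c.1 - 1) (n + 1) = T.val
    rw [hT'val, ← hceq, Function.update_idem]
    have hself : Function.update T.val c (T.val c) = T.val := Function.update_eq_self _ _
    rw [hcval] at hself
    exact hself

lemma card_branch (μ : YoungDiagram) (n : ℕ) :
    Nat.card (SYT μ (n + 1)) = ∑ r ∈ cornerRows μ, Nat.card (SYT (removeCorner μ r) n) := by
  classical
  rw [← Nat.card_congr (Equiv.ofBijective _ (glue_bijective μ n))]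
  letI : ∀ r : {r // r ∈ cornerRows μ}, Fintype (SYT (removeCorner μ r.val) n) :=
    fun r => Fintype.ofFinite _
  rw [Nat.card_eq_fintype_card, Fintype.card_sigma]
  rw [← Finset.sum_coe_sort (cornerRows μ) (fun r => Nat.card (SYT (removeCorner μ r) n))]
  exact Finset.sum_congr rfl fun r _ => (Nat.card_eq_fintype_card).symm

lemma card_syt_zero (μ : YoungDiagram) (h : μ.card = 0) : Nat.card (SYT μ 0) = 1 := by
  have hempty : ∀ c : ℕ × ℕ, c ∉ μ := by
    intro c hc
    have : μ.cells = ∅ := Finset.card_eq_zero.mp h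
    rw [← YoungDiagram.mem_cells, this] at hc
    exact absurd hc (Finset.notMem_empty c)
  have hIcc : Set.Icc 1 0 = (∅ : Set ℕ) := Set.Icc_eq_empty (by norm_num)
  have hset : (μ : Set (ℕ × ℕ)) = ∅ := by
    ext c
    simp only [Set.mem_empty_iff_false, iff_false]
    exact hempty c
  haveI : Unique (SYT μ 0) := by
    refine ⟨⟨⟨fun _ => 0, ?_, ?_, ?_, ?_⟩⟩, ?_⟩
    · rw [hset, hIcc]
      exact ⟨Set.mapsTo_empty _ _, Set.injOn_empty _, Set.surjOn_empty _ _⟩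
    · intro i j hmem
      exact absurd hmem (hempty _)
    · intro i j hmem
      exact absurd hmem (hempty _)
    · intro c _
      rfl
    · intro T
      apply Subtype.ext
      funext x
      exact T.property.2.2.2 x (hempty x)
  exact Nat.card_unique

end Branch

end HookAux

namespace HookAux

lemma sum_reflect_choose (M : ℕ) : ∑ i ∈ range M, (M - 1 - i) = M.choose 2 := by
  have h0 : ∑ i ∈ range M, (M - 1 - i) = ∑ i ∈ range M, i := Finset.sum_range_reflect (fun i => i) M
  have h1 := Finset.sum_range_id_mul_two M
  have h2 : M.choose 2 = M * (M - 1) / 2 := Nat.choose_two_right M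
  omega

lemma cast_gaps (ν : YoungDiagram) (M : ℕ) :
    ((∏ i ∈ range M, ∏ j ∈ Ioo i M, (Lfun ν M i - Lfun ν M j) : ℕ) : ℚ)
      = ∏ i ∈ range M, ∏ j ∈ Ioo i M, ((Lfun ν M i : ℚ) - (Lfun ν M j : ℚ)) := by
  rw [Nat.cast_prod]
  refine Finset.prod_congr rfl fun i _ => ?_
  rw [Nat.cast_prod]
  refine Finset.prod_congr rfl fun j hj => ?_
  have h := L_strict ν M (mem_Ioo.mp hj).1 (mem_Ioo.mp hj).2
  rw [Nat.cast_sub h.le]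

lemma L_removeCorner {μ : YoungDiagram} {r : ℕ} (hr : IsCornerRow μ r) (M i : ℕ) :
    Lfun (removeCorner μ r) M i = if i = r then Lfun μ M i - 1 else Lfun μ M i := by
  have h5 : 0 < μ.rowLen r := by have := hr; unfold IsCornerRow at this; omega
  rw [Lfun, rowLen_removeCorner hr i, Lfun]
  split_ifs with h
  · subst h; omega
  · rfl

lemma L_pos_of_corner {μ : YoungDiagram} {r : ℕ} (hr : IsCornerRow μ r) (M : ℕ) :
    0 < Lfun μ M r := by
  have h5 : 0 < μ.rowLen r := by have := hr; unfold IsCornerRow at this; omega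
  unfold Lfun
  omega

lemma rowLen_colLen_self (μ : YoungDiagram) : μ.rowLen (μ.colLen 0) = 0 := by
  apply rowLen_eq_of
  intro j
  simp only [Nat.not_lt_zero, iff_false]
  intro h
  have h1 := YoungDiagram.mem_iff_lt_colLen.mp h
  have h2 := μ.colLen_anti 0 j (Nat.zero_le j)
  omega

lemma hook_formula_aux : ∀ n : ℕ, ∀ μ : YoungDiagram, μ.card = n →
    (Nat.card (SYT μ n) : ℚ) * ∏ c ∈ μ.cells, (hookLength μ c.1 c.2 : ℚ)
      = n.factorial := by
  intro n
  induction n with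
  | zero =>
    intro μ h
    rw [card_syt_zero μ h, Finset.card_eq_zero.mp h]
    simp
  | succ n ih =>
    intro μ hn
    classical
    set M := μ.colLen 0 with hMdef
    set v : ℕ → ℚ := fun i => ((Lfun μ M i : ℕ) : ℚ) with hvdef
    -- injectivity of v on range M
    have hvinj : Set.InjOn v (range M) := by
      intro a ha b hb hab
      simp only [coe_range, Set.mem_Iio] at ha hb
      have : Lfun μ M a = Lfun μ M b := by
        simpa [hvdef] using hab
      rcases lt_trichotomy a b with h | h | h
      · have := L_strict μ M h hb; omega
      · exact h
      · have := L_strict μ M h ha; omega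
    -- B1 for μ
    have hB1μ : (∏ c ∈ μ.cells, (hookLength μ c.1 c.2 : ℚ)) *
        (∏ i ∈ range M, ∏ j ∈ Ioo i M, (v i - v j))
        = ∏ i ∈ range M, ((Lfun μ M i).factorial : ℚ) := by
      have hgap : ∏ i ∈ range M, ∏ j ∈ Ioo i M, ((Lfun μ M i - Lfun μ M j : ℕ) : ℚ)
          = ∏ i ∈ range M, ∏ j ∈ Ioo i M, (v i - v j) := by
        refine Finset.prod_congr rfl fun i _ => Finset.prod_congr rfl fun j hj => ?_
        have h := L_strict μ M (mem_Ioo.mp hj).1 (mem_Ioo.mp hj).2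
        rw [Nat.cast_sub h.le]
      have h := congrArg (fun k : ℕ => (k : ℚ)) (hook_prod_eq μ M le_rfl)
      simp only [Nat.cast_mul, Nat.cast_prod] at h
      rw [← hgap]
      exact h
    -- the summand identity
    have hkey : ∀ r ∈ cornerRows μ,
        (Nat.card (SYT (removeCorner μ r) n) : ℚ) *
          ∏ c ∈ μ.cells, (hookLength μ c.1 c.2 : ℚ)
        = (n.factorial : ℚ) *
          (v r * ∏ j ∈ (range M).erase r, ((v r - v j - 1) / (v r - v j))) := by
      intro r hrmem
      have hcorn : IsCornerRow μ r := mem_cornerRows.mp hrmem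
      have hrM : r < M := cornerRow_lt hcorn
      set ν := removeCorner μ r with hνdef
      have hMν : ν.colLen 0 ≤ M := colLen_removeCorner_le hcorn
      set v' : ℕ → ℚ := fun i => ((Lfun ν M i : ℕ) : ℚ) with hv'def
      have hLr : Lfun ν M r = Lfun μ M r - 1 := by
        rw [L_removeCorner hcorn M r]
        simp
      have hLne : ∀ i, i ≠ r → Lfun ν M i = Lfun μ M i := by
        intro i hi
        rw [L_removeCorner hcorn M i, if_neg hi]
      have hv'ne : ∀ i, i ≠ r → v' i = v i := by
        intro i hi
        simp only [hv'def, hvdef, hLne i hi]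
      have hv'r : v' r = v r - 1 := by
        have hpos := L_pos_of_corner hcorn M
        simp only [hv'def, hvdef, hLr]
        rw [Nat.cast_sub hpos]
        norm_num
      -- B1 for ν
      have hB1ν : (∏ c ∈ ν.cells, (hookLength ν c.1 c.2 : ℚ)) *
          (∏ i ∈ range M, ∏ j ∈ Ioo i M, (v' i - v' j))
          = ∏ i ∈ range M, ((Lfun ν M i).factorial : ℚ) := by
        have hgap : ∏ i ∈ range M, ∏ j ∈ Ioo i M, ((Lfun ν M i - Lfun ν M j : ℕ) : ℚ)
            = ∏ i ∈ range M, ∏ j ∈ Ioo i M, (v' i - v' j) := by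
          refine Finset.prod_congr rfl fun i _ => Finset.prod_congr rfl fun j hj => ?_
          have h := L_strict ν M (mem_Ioo.mp hj).1 (mem_Ioo.mp hj).2
          rw [Nat.cast_sub h.le]
        have h := congrArg (fun k : ℕ => (k : ℚ)) (hook_prod_eq ν M hMν)
        simp only [Nat.cast_mul, Nat.cast_prod] at h
        rw [← hgap]
        exact h
      -- pairs update
      have hpairs := pairs_update M r hrM v v' hv'ne hv'r
      -- factorials
      have hFact : ∏ i ∈ range M, ((Lfun μ M i).factorial : ℚ)
          = (∏ i ∈ range M, ((Lfun ν M i).factorial : ℚ)) * v r := by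
        rw [← Finset.mul_prod_erase (range M)
            (fun i => ((Lfun μ M i).factorial : ℚ)) (mem_range.mpr hrM),
          ← Finset.mul_prod_erase (range M)
            (fun i => ((Lfun ν M i).factorial : ℚ)) (mem_range.mpr hrM)]
        have h1 : ∏ i ∈ (range M).erase r, ((Lfun μ M i).factorial : ℚ)
            = ∏ i ∈ (range M).erase r, ((Lfun ν M i).factorial : ℚ) := by
          refine Finset.prod_congr rfl fun i hi => ?_
          rw [L_removeCorner hcorn M i, if_neg (mem_erase.mp hi).1]
        rw [h1]
        have hpos := L_pos_of_corner hcorn M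
        have h2 : ((Lfun μ M r).factorial : ℚ)
            = ((Lfun ν M r).factorial : ℚ) * v r := by
          rw [hLr]
          have h3 := Nat.mul_factorial_pred hpos.ne'
          simp only [hvdef]
          rw [← h3]
          push_cast
          ring
        rw [h2]
        ring
      -- nonvanishing
      have hGν : (∏ i ∈ range M, ∏ j ∈ Ioo i M, (v' i - v' j)) ≠ 0 := by
        refine Finset.prod_ne_zero_iff.mpr fun i _ => Finset.prod_ne_zero_iff.mpr fun j hj => ?_
        have h := L_strict ν M (mem_Ioo.mp hj).1 (mem_Ioo.mp hj).2
        have : (Lfun ν M j : ℚ) < (Lfun ν M i : ℚ) := by exact_mod_cast h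
        simp only [hv'def]
        intro hc
        rw [sub_eq_zero] at hc
        rw [hc] at this
        exact lt_irrefl _ this
      have hP0 : (∏ j ∈ (range M).erase r, (v r - v j)) ≠ 0 := by
        refine Finset.prod_ne_zero_iff.mpr fun j hj => ?_
        rcases mem_erase.mp hj with ⟨hne, hjM⟩
        intro hc
        rw [sub_eq_zero] at hc
        exact hne (hvinj (mem_coe.mpr hjM) (mem_coe.mpr (mem_range.mpr hrM)) hc.symm)
      -- the cross relation  Hμ * P0 = Hν * (v r * P1)
      have hcross : (∏ c ∈ μ.cells, (hookLength μ c.1 c.2 : ℚ)) *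
          (∏ j ∈ (range M).erase r, (v r - v j))
          = (∏ c ∈ ν.cells, (hookLength ν c.1 c.2 : ℚ)) *
            (v r * ∏ j ∈ (range M).erase r, (v r - v j - 1)) := by
        apply mul_right_cancel₀ hGν
        linear_combination (∏ c ∈ μ.cells, (hookLength μ c.1 c.2 : ℚ)) * hpairs
          + (∏ j ∈ (range M).erase r, (v r - v j - 1)) * hB1μ
          + (∏ j ∈ (range M).erase r, (v r - v j - 1)) * hFact
          - (v r * ∏ j ∈ (range M).erase r, (v r - v j - 1)) * hB1ν
      -- the inductive hypothesis for ν
      have hcard : ν.card = n := by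
        rw [hνdef, removeCorner_card hcorn, hn]
        omega
      have hih := ih ν hcard
      -- conclude
      have hdiv : ∏ j ∈ (range M).erase r, ((v r - v j - 1) / (v r - v j))
          = (∏ j ∈ (range M).erase r, (v r - v j - 1)) /
            (∏ j ∈ (range M).erase r, (v r - v j)) := Finset.prod_div_distrib _ _
      rw [hdiv]
      field_simp
      linear_combination (Nat.card (SYT ν n) : ℚ) * hcross
        + (v r * ∏ j ∈ (range M).erase r, (v r - v j - 1)) * hih
    -- sum over all rows via the crux identity
    have hcrux := crux_identity (range M) v hvinj
    rw [card_range] at hcrux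
    have hsumv : ∑ r ∈ range M, v r = (n + 1 : ℚ) + (M.choose 2 : ℚ) := by
      have h1 : ∑ i ∈ range M, Lfun μ M i = (n + 1) + M.choose 2 := by
        have h2 := card_eq_sum_rowLens μ M le_rfl
        have h3 := sum_reflect_choose M
        simp only [Lfun]
        rw [Finset.sum_add_distrib]
        omega
      simp only [hvdef]
      rw [← Nat.cast_sum, h1]
      push_cast
      ring
    have hsum_all : ∑ r ∈ range M,
        (v r * ∏ j ∈ (range M).erase r, ((v r - v j - 1) / (v r - v j))) = (n + 1 : ℚ) := by
      rw [hcrux, hsumv]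
      ring
    have hzero : ∀ r ∈ range M, r ∉ cornerRows μ →
        v r * ∏ j ∈ (range M).erase r, ((v r - v j - 1) / (v r - v j)) = 0 := by
      intro r hrM' hrnc
      have hrM : r < M := mem_range.mp hrM'
      have hnc : ¬ IsCornerRow μ r := fun h => hrnc (mem_cornerRows.mpr h)
      have heq : μ.rowLen (r + 1) = μ.rowLen r := by
        have := μ.rowLen_anti r (r + 1) (Nat.le_succ r)
        unfold IsCornerRow at hnc
        omega
      by_cases hcase : r + 1 < M
      · have hmem : r + 1 ∈ (range M).erase r := by
          rw [mem_erase]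
          exact ⟨by omega, mem_range.mpr hcase⟩
        have hLrr : Lfun μ M r = Lfun μ M (r + 1) + 1 := by
          simp only [Lfun]
          omega
        have hfac : (v r - v (r + 1) - 1) / (v r - v (r + 1)) = 0 := by
          have hv : v r - v (r + 1) - 1 = 0 := by
            simp only [hvdef]
            rw [hLrr]
            push_cast
            ring
          rw [hv, zero_div]
        rw [Finset.prod_eq_zero hmem hfac, mul_zero]
      · have hr1 : r + 1 = M := by omega
        have hrowM : μ.rowLen M = 0 := by
          rw [hMdef]
          exact rowLen_colLen_self μ
        have hvr : v r = 0 := by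
          simp only [hvdef]
          have hL0 : Lfun μ M r = 0 := by
            have h4 : μ.rowLen r = 0 := by rw [← heq, hr1, hrowM]
            simp only [Lfun]
            omega
          rw [hL0]
          norm_num
        rw [hvr, zero_mul]
    have hsub : cornerRows μ ⊆ range M := by
      intro x hx
      rw [hMdef]
      exact mem_range.mpr (cornerRow_lt (mem_cornerRows.mp hx))
    have hsum_corner : ∑ r ∈ cornerRows μ,
        (v r * ∏ j ∈ (range M).erase r, ((v r - v j - 1) / (v r - v j))) = (n + 1 : ℚ) := by
      rw [← hsum_all]
      exact Finset.sum_subset hsub hzero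
    -- conclude
    have hbr := card_branch μ n
    calc (Nat.card (SYT μ (n + 1)) : ℚ) * ∏ c ∈ μ.cells, (hookLength μ c.1 c.2 : ℚ)
        = (∑ r ∈ cornerRows μ, (Nat.card (SYT (removeCorner μ r) n) : ℚ)) *
            ∏ c ∈ μ.cells, (hookLength μ c.1 c.2 : ℚ) := by
          rw [hbr]
          push_cast
          ring
      _ = ∑ r ∈ cornerRows μ, ((Nat.card (SYT (removeCorner μ r) n) : ℚ) *
            ∏ c ∈ μ.cells, (hookLength μ c.1 c.2 : ℚ)) := Finset.sum_mul _ _ _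
      _ = ∑ r ∈ cornerRows μ, ((n.factorial : ℚ) *
            (v r * ∏ j ∈ (range M).erase r, ((v r - v j - 1) / (v r - v j)))) :=
          Finset.sum_congr rfl hkey
      _ = (n.factorial : ℚ) * ∑ r ∈ cornerRows μ,
            (v r * ∏ j ∈ (range M).erase r, ((v r - v j - 1) / (v r - v j))) :=
          (Finset.mul_sum _ _ _).symm
      _ = (n.factorial : ℚ) * (n + 1 : ℚ) := by rw [hsum_corner]
      _ = ((n + 1).factorial : ℚ) := by
          rw [Nat.factorial_succ]
          push_cast
          ring

end HookAux

/-- Hook length formula: the number of standard Young tableaux of shape `μ` with `n`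
cells equals `n!` divided by the product of the hook lengths of the cells of `μ`. -/
theorem stmt_10 (μ : YoungDiagram) (n : ℕ) (hn : μ.card = n) :
    (Nat.card (SYT μ n) : ℚ) =
      (n.factorial : ℚ) / ∏ c ∈ μ.cells, (hookLength μ c.1 c.2 : ℚ) := by
  have h := HookAux.hook_formula_aux n μ hn
  have hH : (∏ c ∈ μ.cells, (hookLength μ c.1 c.2 : ℚ)) ≠ 0 := by
    refine Finset.prod_ne_zero_iff.mpr fun c hc => ?_
    have hcμ : c ∈ μ := (YoungDiagram.mem_cells _).mp hc
    have hpos : 1 ≤ hookLength μ c.1 c.2 := HookAux.hook_pos (by rwa [Prod.mk.eta])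
    exact Nat.cast_ne_zero.mpr (by omega)
  rw [eq_div_iff hH]
  exact h
end

section
/- Let m_1 < m_2 < ... < m_k be distinct nonnegative integers with m = ∑ m_i, and let n ≥ 0. Define b_{m}(y_1,...,y_k) = det(y_i^{(m_j)})_{i,j}, the determinant of the matrix of falling factorials. Then as polynomials: b_m(x_1,...,x_k) · ((∑ x_i) - m)^{(n)} = ∑_{n_1+...+n_k = n+m} (n!/∏ n_i!) · b_m(n_1,...,n_k) · ∏_i x_i^{(n_i)}, where the sum is over k-tuples of nonnegative integers. -/
open MvPolynomial Finset

/-- The rational falling factorial `x (x-1) ⋯ (x-m+1)`. -/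
def fallFacQ (x : ℚ) (m : ℕ) : ℚ := ∏ j ∈ Finset.range m, (x - j)

/- ### Auxiliary lemmas -/

lemma fallFacQ_succ (x : ℚ) (m : ℕ) : fallFacQ x (m+1) = fallFacQ x m * (x - m) :=
  Finset.prod_range_succ _ _

lemma fallFacQ_succ' (x : ℚ) (m : ℕ) : fallFacQ x (m+1) = fallFacQ (x-1) m * x := by
  unfold fallFacQ
  rw [Finset.prod_range_succ']
  simp only [Nat.cast_zero, sub_zero]
  congr 1
  exact Finset.prod_congr rfl (fun j _ => by push_cast; ring)

lemma fallFacQ_self (M : ℕ) : fallFacQ (M : ℚ) M = M.factorial := by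
  induction M with
  | zero => simp [fallFacQ]
  | succ M ih =>
    rw [fallFacQ_succ']
    push_cast
    rw [show ((M:ℚ)+1-1) = (M:ℚ) by ring, ih]
    push_cast [Nat.factorial_succ]; ring

lemma fallFacQ_zero_of_lt {c M : ℕ} (h : c < M) : fallFacQ (c : ℚ) M = 0 :=
  Finset.prod_eq_zero (Finset.mem_range.2 h) (by simp)

lemma fallFacQ_mul (x : ℚ) (m : ℕ) : x * fallFacQ (x-1) m = fallFacQ x m * (x - m) := by
  rw [← fallFacQ_succ, fallFacQ_succ']; ring

lemma fallFac_succ {k : ℕ} (p : MvPolynomial (Fin k) ℚ) (n : ℕ) :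
    fallFac p (n+1) = fallFac p n * (p - (n : MvPolynomial (Fin k) ℚ)) :=
  Finset.prod_range_succ _ _

/- ### Determinant lemmas -/

lemma det_row_scale {k : ℕ} (A : Matrix (Fin k) (Fin k) ℚ) (w : Fin k → ℚ) :
    ∑ i, (A.updateRow i (fun j => w j * A i j)).det = (∑ j, w j) * A.det := by
  have h : ∀ i : Fin k, (A.updateRow i (fun j => w j * A i j)).det
      = ∑ σ : Equiv.Perm (Fin k), Equiv.Perm.sign σ • (w (σ.symm i) * ∏ r, A (σ r) r) := by
    intro i
    rw [Matrix.det_apply]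
    refine Finset.sum_congr rfl fun σ _ => ?_
    congr 1
    have this1 : ∀ r : Fin k, A.updateRow i (fun j => w j * A i j) (σ r) r
        = (if r = σ.symm i then w r else 1) * A (σ r) r := by
      intro r
      by_cases hr : r = σ.symm i
      · subst hr
        simp [Matrix.updateRow_apply, Equiv.apply_symm_apply]
      · have : σ r ≠ i := fun hc => hr (by simp [← hc])
        simp [Matrix.updateRow_apply, this, hr]
    rw [Finset.prod_congr rfl (fun r _ => this1 r), Finset.prod_mul_distrib,
      Finset.prod_ite_eq' Finset.univ (σ.symm i) w]
    simp
  rw [Finset.sum_congr rfl (fun i _ => h i), Finset.sum_comm]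
  rw [Matrix.det_apply, Finset.mul_sum]
  refine Finset.sum_congr rfl fun σ _ => ?_
  simp only [Units.smul_def, zsmul_eq_mul]
  rw [← Finset.mul_sum, ← Finset.sum_mul, Equiv.sum_comp σ.symm w]
  ring

lemma det_rec {k : ℕ} (m : Fin k → ℕ) (y : Fin k → ℚ) :
    ∑ i, y i * Matrix.det (Matrix.of fun r j : Fin k =>
        fallFacQ (y r - if r = i then 1 else 0) (m j))
      = ((∑ i, y i) - ∑ j, (m j : ℚ)) *
        Matrix.det (Matrix.of fun r j : Fin k => fallFacQ (y r) (m j)) := by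
  set A : Matrix (Fin k) (Fin k) ℚ := Matrix.of fun r j => fallFacQ (y r) (m j) with hA
  have step : ∀ i : Fin k, y i * Matrix.det (Matrix.of fun r j : Fin k =>
      fallFacQ (y r - if r = i then 1 else 0) (m j))
      = y i * A.det - (A.updateRow i (fun j => (m j : ℚ) * A i j)).det := by
    intro i
    have hmat : (Matrix.of fun r j : Fin k => fallFacQ (y r - if r = i then 1 else 0) (m j))
        = A.updateRow i (fun j => fallFacQ (y i - 1) (m j)) := by
      ext r j
      by_cases hr : r = i <;> simp [Matrix.updateRow_apply, hr, hA]
    rw [hmat, ← Matrix.det_updateRow_smul]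
    have : (y i • fun j => fallFacQ (y i - 1) (m j))
        = (fun j => y i * A i j) + (-1 : ℚ) • (fun j => (m j : ℚ) * A i j) := by
      funext j
      simp only [Pi.smul_apply, Pi.add_apply, smul_eq_mul, hA, Matrix.of_apply]
      rw [fallFacQ_mul]; ring
    rw [this, Matrix.det_updateRow_add, Matrix.det_updateRow_smul]
    rw [show ((-1 : ℚ) * (A.updateRow i fun j => (m j : ℚ) * A i j).det)
      = -((A.updateRow i fun j => (m j : ℚ) * A i j).det) by ring, ← sub_eq_add_neg]
    congr 1
    have : (fun j => y i * A i j) = y i • A i := rfl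
    rw [this, Matrix.det_updateRow_smul, Matrix.updateRow_eq_self]
  rw [Finset.sum_congr rfl (fun i _ => step i), Finset.sum_sub_distrib,
    ← Finset.sum_mul, det_row_scale]
  ring

/- ### The determinant `b_m` evaluated at naturals -/

section Main
variable {k : ℕ} (m : Fin k → ℕ)

noncomputable def bQ (c : Fin k → ℕ) : ℚ :=
  Matrix.det (Matrix.of fun i j : Fin k => fallFacQ (c i : ℚ) (m j))

lemma bQ_eq_zero {c : Fin k → ℕ} (hsum : ∑ i, c i = ∑ i, m i)
    (hc : ∀ σ : Equiv.Perm (Fin k), c ≠ m ∘ σ) : bQ m c = 0 := by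
  unfold bQ
  rw [Matrix.det_apply]
  refine Finset.sum_eq_zero fun σ _ => ?_
  suffices h : ∏ i, (Matrix.of fun i j : Fin k => fallFacQ (c i : ℚ) (m j)) (σ i) i = 0 by
    rw [h, smul_zero]
  by_cases hle : ∀ i, m i ≤ c (σ i)
  · exfalso
    have hsum2 : ∑ i, c (σ i) = ∑ i, m i := by
      rw [Equiv.sum_comp σ c, hsum]
    have := (Finset.sum_eq_sum_iff_of_le (fun i _ => hle i)).1 hsum2.symm
    refine hc σ.symm ?_
    funext i
    have := (this (σ.symm i) (Finset.mem_univ _)).symm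
    simpa using this
  · push_neg at hle
    obtain ⟨i, hi⟩ := hle
    exact Finset.prod_eq_zero (Finset.mem_univ i)
      (by simpa using fallFacQ_zero_of_lt hi)

lemma bQ_perm (hm : StrictMono m) (σ : Equiv.Perm (Fin k)) :
    bQ m (m ∘ σ) = (Equiv.Perm.sign σ : ℤ) * ∏ i, ((m i).factorial : ℚ) := by
  unfold bQ
  have h1 : (Matrix.of fun i j : Fin k => fallFacQ ((m ∘ σ) i : ℚ) (m j))
      = (Matrix.of fun i j : Fin k => fallFacQ (m i : ℚ) (m j)).submatrix σ id := by
    ext i j; rfl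
  rw [h1, Matrix.det_permute]
  have hdet : (Matrix.of fun i j : Fin k => fallFacQ (m i : ℚ) (m j)).det
      = ∏ i, ((m i).factorial : ℚ) := by
    rw [Matrix.det_of_lowerTriangular _ ?ht]
    case ht =>
      intro i j hij
      simp only [OrderDual.toDual_lt_toDual] at hij
      exact fallFacQ_zero_of_lt (hm hij)
    exact Finset.prod_congr rfl fun i _ => by simp [fallFacQ_self]
  rw [hdet]

noncomputable def coefQ (n : ℕ) (c : Fin k → ℕ) : ℚ :=
  (n.factorial : ℚ) / (∏ i, ((c i).factorial : ℚ)) * bQ m c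

noncomputable def RHSb (n : ℕ) : MvPolynomial (Fin k) ℚ :=
  ∑ c ∈ (Fintype.piFinset fun _ : Fin k =>
        Finset.range (n + (∑ i, m i) + 1)).filter
      (fun c => ∑ i, c i = n + ∑ i, m i),
    C (coefQ m n c) * ∏ i, fallFac (X i) (c i)

/- ### Base case -/

lemma base (hm : StrictMono m) :
    Matrix.det (Matrix.of fun i j : Fin k => fallFac (X i) (m j)) = RHSb m 0 := by
  classical
  set S := ∑ i, m i with hS
  set s : Finset (Fin k → ℕ) :=
    Finset.image (fun σ : Equiv.Perm (Fin k) => m ∘ σ) Finset.univ with hs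
  have hmem : ∀ σ : Equiv.Perm (Fin k), (m ∘ σ) ∈
      (Fintype.piFinset fun _ : Fin k => Finset.range (0 + S + 1)).filter
        (fun c => ∑ i, c i = 0 + S) := by
    intro σ
    rw [Finset.mem_filter]
    constructor
    · rw [Fintype.mem_piFinset]
      intro i
      rw [Finset.mem_range]
      have : m (σ i) ≤ S := Finset.single_le_sum (fun i _ => Nat.zero_le _)
        (Finset.mem_univ (σ i))
      simp only [Function.comp_apply]
      omega
    · simpa using Equiv.sum_comp σ m
  have hsub : s ⊆ (Fintype.piFinset fun _ : Fin k => Finset.range (0 + S + 1)).filter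
        (fun c => ∑ i, c i = 0 + S) := by
    intro c hc
    rw [hs, Finset.mem_image] at hc
    obtain ⟨σ, _, rfl⟩ := hc
    exact hmem σ
  rw [RHSb, ← Finset.sum_subset hsub ?hz]
  case hz =>
    intro c hcf hcs
    have hb : bQ m c = 0 := by
      refine bQ_eq_zero m ?_ ?_
      · have := (Finset.mem_filter.1 hcf).2
        omega
      · intro σ hceq
        exact hcs (by rw [hs, Finset.mem_image]; exact ⟨σ, Finset.mem_univ _, hceq.symm⟩)
    rw [coefQ, hb]
    simp
  rw [hs, Finset.sum_image (fun σ _ τ _ h => ?inj)]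
  case inj =>
    exact Equiv.ext fun i => hm.injective (congrFun h i)
  have hcoef : ∀ σ : Equiv.Perm (Fin k),
      coefQ m 0 (m ∘ σ) = ((Equiv.Perm.sign σ : ℤ) : ℚ) := by
    intro σ
    rw [coefQ, bQ_perm m hm σ]
    have hprod : ∏ i, (((m ∘ σ) i).factorial : ℚ) = ∏ i, ((m i).factorial : ℚ) :=
      Equiv.prod_comp σ fun i => ((m i).factorial : ℚ)
    rw [hprod, Nat.factorial_zero]
    have hne : (∏ i, ((m i).factorial : ℚ)) ≠ 0 :=
      Finset.prod_ne_zero_iff.2 fun i _ => Nat.cast_ne_zero.2 (Nat.factorial_ne_zero _)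
    field_simp
    simp
  rw [← Matrix.det_transpose, Matrix.det_apply]
  refine Finset.sum_congr rfl fun σ _ => ?_
  rw [hcoef σ]
  have : ∀ i : Fin k, (Matrix.of fun i j : Fin k => fallFac (X i) (m j)).transpose (σ i) i
      = fallFac (X i) (m (σ i)) := fun i => rfl
  rw [Finset.prod_congr rfl fun i _ => this i]
  simp [Units.smul_def, zsmul_eq_mul, map_intCast, Function.comp]

/- ### Inductive step : scalar part -/

lemma coef_step (n : ℕ) (c' : Fin k → ℕ) (hc' : ∑ i, c' i = (n+1) + ∑ i, m i) :
    ∑ i, (if 1 ≤ c' i then coefQ m n (Function.update c' i (c' i - 1)) else 0)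
      = coefQ m (n+1) c' := by
  classical
  set y : Fin k → ℚ := fun i => (c' i : ℚ) with hy
  have hprodne : (∏ j, ((c' j).factorial : ℚ)) ≠ 0 :=
    Finset.prod_ne_zero_iff.2 fun j _ => Nat.cast_ne_zero.2 (Nat.factorial_ne_zero _)
  have key : ∀ i : Fin k,
      (if 1 ≤ c' i then coefQ m n (Function.update c' i (c' i - 1)) else 0)
      = (n.factorial : ℚ) / (∏ j, ((c' j).factorial : ℚ)) *
          (y i * Matrix.det (Matrix.of fun r j : Fin k =>
            fallFacQ (y r - if r = i then 1 else 0) (m j))) := by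
    intro i
    by_cases hi : 1 ≤ c' i
    · rw [if_pos hi]
      have hdet : bQ m (Function.update c' i (c' i - 1))
          = Matrix.det (Matrix.of fun r j : Fin k =>
              fallFacQ (y r - if r = i then 1 else 0) (m j)) := by
        unfold bQ
        congr 1
        ext r j
        by_cases hr : r = i
        · subst hr
          simp only [Matrix.of_apply, Function.update_self, if_pos rfl, hy]
          rw [Nat.cast_sub hi]
          norm_num
        · simp [Matrix.of_apply, Function.update_of_ne hr, hr, hy]
      have hfact : (∏ j, (((Function.update c' i (c' i - 1)) j).factorial : ℚ)) * (c' i : ℚ)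
          = ∏ j, ((c' j).factorial : ℚ) := by
        rw [← Finset.prod_erase_mul _ _ (Finset.mem_univ i),
          ← Finset.prod_erase_mul _ _ (Finset.mem_univ i)]
        have h1 : ∀ j ∈ Finset.univ.erase i,
            (((Function.update c' i (c' i - 1)) j).factorial : ℚ) = ((c' j).factorial : ℚ) := by
          intro j hj
          rw [Function.update_of_ne (Finset.mem_erase.1 hj).1]
        rw [Finset.prod_congr rfl h1, Function.update_self]
        have h2 : c' i = (c' i - 1) + 1 := (Nat.succ_pred_eq_of_pos hi).symm
        rw [mul_assoc]
        congr 1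
        rw [h2, Nat.factorial_succ]
        push_cast [← h2]
        ring
      unfold coefQ
      rw [hdet]
      have hyine : (y i) ≠ 0 := by
        simp only [hy, ne_eq, Nat.cast_eq_zero]
        omega
      field_simp
      rw [← hfact]
      push_cast [hy]
      ring
    · rw [if_neg hi]
      have : y i = 0 := by simp only [hy, Nat.cast_eq_zero]; omega
      rw [this]
      ring
  rw [Finset.sum_congr rfl fun i _ => key i, ← Finset.mul_sum, det_rec m y]
  have hsy : ∑ i, y i = ((n:ℚ) + 1 + ∑ j, (m j : ℚ)) := by
    simp only [hy]
    rw [← Nat.cast_sum, hc']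
    push_cast
    ring
  rw [hsy]
  unfold coefQ bQ
  have : ((n:ℚ)+1+ ∑ j, (m j:ℚ) - ∑ j, (m j:ℚ)) = ((n:ℚ)+1) := by ring
  rw [this]
  rw [Nat.factorial_succ]
  push_cast
  field_simp
  ring

/- ### Inductive step : polynomial part -/

lemma P_mul (c : Fin k → ℕ) (i : Fin k) :
    (∏ i', fallFac (X i') (c i')) * (X i - ((c i : ℕ) : MvPolynomial (Fin k) ℚ))
      = ∏ i', fallFac (X i') (Function.update c i (c i + 1) i') := by
  classical
  rw [Finset.prod_congr rfl (fun i' _ =>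
      show fallFac (X i') (Function.update c i (c i + 1) i')
        = Function.update (fun r => fallFac (X r) (c r)) i
            (fallFac (X i) (c i + 1)) i' by
    by_cases h : i' = i
    · subst h; simp [Function.update_self]
    · simp [Function.update_of_ne h])]
  rw [Finset.prod_update_of_mem (Finset.mem_univ i)]
  rw [fallFac_succ]
  rw [← Finset.mul_prod_erase Finset.univ (fun r => fallFac (X r) (c r)) (Finset.mem_univ i)]
  simp only [Finset.sdiff_singleton_eq_erase]
  ring

lemma step (n : ℕ) :
    RHSb m n * ((∑ i : Fin k, X i) - ((∑ i, m i : ℕ) : MvPolynomial (Fin k) ℚ)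
      - (n : MvPolynomial (Fin k) ℚ)) = RHSb m (n+1) := by
  classical
  set S := ∑ i, m i with hS
  set q : MvPolynomial (Fin k) ℚ :=
    (∑ i : Fin k, X i) - ((S : ℕ) : MvPolynomial (Fin k) ℚ) - (n : MvPolynomial (Fin k) ℚ)
    with hq
  set An : Finset (Fin k → ℕ) := (Fintype.piFinset fun _ : Fin k =>
      Finset.range (n + S + 1)).filter (fun c => ∑ i, c i = n + S) with hAn
  set An1 : Finset (Fin k → ℕ) := (Fintype.piFinset fun _ : Fin k =>
      Finset.range ((n+1) + S + 1)).filter (fun c => ∑ i, c i = (n+1) + S) with hAn1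
  have hqc : ∀ c ∈ An, q = ∑ i : Fin k, (X i - ((c i : ℕ) : MvPolynomial (Fin k) ℚ)) := by
    intro c hc
    have hsum : ∑ i, c i = n + S := (Finset.mem_filter.1 hc).2
    rw [Finset.sum_sub_distrib, hq]
    have h2 : (∑ i, ((c i : ℕ) : MvPolynomial (Fin k) ℚ)) = ((n + S : ℕ) : MvPolynomial (Fin k) ℚ) := by
      rw [← Nat.cast_sum, hsum]
    rw [h2]
    push_cast
    ring
  have step1 : RHSb m n * q = ∑ c ∈ An, ∑ i : Fin k,
      C (coefQ m n c) * ∏ i', fallFac (X i') (Function.update c i (c i + 1) i') := by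
    rw [RHSb, Finset.sum_mul]
    refine Finset.sum_congr rfl fun c hc => ?_
    rw [hqc c hc, Finset.mul_sum]
    refine Finset.sum_congr rfl fun i _ => ?_
    rw [mul_assoc, P_mul]
  rw [step1, Finset.sum_comm]
  have step2 : ∀ i : Fin k,
      (∑ c ∈ An, C (coefQ m n c) * ∏ i', fallFac (X i') (Function.update c i (c i + 1) i'))
      = ∑ c' ∈ An1.filter (fun c' => 1 ≤ c' i),
          C (coefQ m n (Function.update c' i (c' i - 1))) * ∏ i', fallFac (X i') (c' i') := by
    intro i
    refine Finset.sum_bij' (fun c _ => Function.update c i (c i + 1))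
      (fun c' _ => Function.update c' i (c' i - 1)) ?hi ?hj ?left ?right ?hfg
    case hi =>
      intro c hc
      have hmem := Fintype.mem_piFinset.1 (Finset.mem_filter.1 hc).1
      have hsum : ∑ i', c i' = n + S := (Finset.mem_filter.1 hc).2
      rw [Finset.mem_filter, Finset.mem_filter, Fintype.mem_piFinset]
      refine ⟨⟨fun i' => ?_, ?_⟩, ?_⟩
      · rw [Finset.mem_range]
        have := Finset.mem_range.1 (hmem i')
        by_cases h : i' = i
        · subst h; rw [Function.update_self]; omega
        · rw [Function.update_of_ne h]; omega
      · rw [Finset.sum_update_of_mem (Finset.mem_univ i)]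
        simp only [Finset.sdiff_singleton_eq_erase]
        have := Finset.add_sum_erase Finset.univ c (Finset.mem_univ i)
        omega
      · rw [Function.update_self]; omega
    case hj =>
      intro c' hc'
      have h1 := Finset.mem_filter.1 hc'
      have hge : 1 ≤ c' i := h1.2
      have hmem := Fintype.mem_piFinset.1 (Finset.mem_filter.1 h1.1).1
      have hsum : ∑ i', c' i' = (n+1) + S := (Finset.mem_filter.1 h1.1).2
      rw [Finset.mem_filter, Fintype.mem_piFinset]
      have hpair : ∀ i' : Fin k, i' ≠ i → c' i' + c' i ≤ (n+1) + S := by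
        intro i' hne
        have hsub : ({i', i} : Finset (Fin k)) ⊆ Finset.univ := Finset.subset_univ _
        have := Finset.sum_le_sum_of_subset (f := c') hsub
        rw [Finset.sum_pair hne, hsum] at this
        omega
      refine ⟨fun i' => ?_, ?_⟩
      · rw [Finset.mem_range]
        have := Finset.mem_range.1 (hmem i')
        by_cases h : i' = i
        · subst h; rw [Function.update_self]; omega
        · rw [Function.update_of_ne h]
          have := hpair i' h
          omega
      · rw [Finset.sum_update_of_mem (Finset.mem_univ i)]
        simp only [Finset.sdiff_singleton_eq_erase]
        have := Finset.add_sum_erase Finset.univ c' (Finset.mem_univ i)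
        omega
    case left =>
      intro c hc
      simp [Function.update_idem, Function.update_self]
    case right =>
      intro c' hc'
      have hge : 1 ≤ c' i := (Finset.mem_filter.1 hc').2
      rw [Function.update_self, Function.update_idem]
      rw [Nat.sub_add_cancel hge, Function.update_eq_self]
    case hfg =>
      intro c hc
      congr 2
      rw [Function.update_self, Function.update_idem]
      simp
  rw [Finset.sum_congr rfl fun i _ => step2 i]
  rw [Finset.sum_congr rfl fun i (_ : i ∈ Finset.univ) =>
    Finset.sum_filter (fun c' => 1 ≤ c' i)
      (fun c' => C (coefQ m n (Function.update c' i (c' i - 1))) *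
        ∏ i', fallFac (X i') (c' i'))]
  rw [Finset.sum_comm]
  rw [RHSb]
  refine Finset.sum_congr rfl fun c' hc' => ?_
  have hsum : ∑ i, c' i = (n+1) + S := (Finset.mem_filter.1 hc').2
  have : ∀ i : Fin k, (if 1 ≤ c' i then
      C (coefQ m n (Function.update c' i (c' i - 1))) * ∏ i', fallFac (X i') (c' i') else 0)
      = C (if 1 ≤ c' i then coefQ m n (Function.update c' i (c' i - 1)) else 0) *
          ∏ i', fallFac (X i') (c' i') := by
    intro i
    split_ifs <;> simp
  rw [Finset.sum_congr rfl fun i _ => this i, ← Finset.sum_mul, ← map_sum,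
    coef_step m n c' hsum]

lemma main (hm : StrictMono m) (n : ℕ) :
    Matrix.det (Matrix.of fun i j : Fin k => fallFac (X i) (m j)) *
        fallFac ((∑ i : Fin k, X i) - ((∑ i, m i : ℕ) : MvPolynomial (Fin k) ℚ)) n
      = RHSb m n := by
  induction n with
  | zero =>
    rw [show fallFac ((∑ i : Fin k, X i) - ((∑ i, m i : ℕ) : MvPolynomial (Fin k) ℚ)) 0
      = 1 from Finset.prod_range_zero _, mul_one]
    exact base m hm
  | succ n ih =>
    rw [fallFac_succ, ← mul_assoc, ih, step]

end Main

/-- For `m₁ < ⋯ < m_k` with `m = ∑ mᵢ`, writing `b_m(y) = det(yᵢ^{(m_j)})`,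
`b_m(x₁,…,x_k) · (∑xᵢ - m)^{(n)}
  = ∑_{n₁+⋯+n_k = n+m} (n!/∏ nᵢ!) · b_m(n₁,…,n_k) · ∏ᵢ xᵢ^{(nᵢ)}`. -/
theorem stmt_11 (k n : ℕ) (hk : 0 < k) (m : Fin k → ℕ) (hm : StrictMono m) :
    Matrix.det (Matrix.of fun i j : Fin k => fallFac (X i) (m j)) *
        fallFac ((∑ i : Fin k, X i) - ((∑ i, m i : ℕ) : MvPolynomial (Fin k) ℚ)) n =
      ∑ c ∈ (Fintype.piFinset fun _ : Fin k =>
            Finset.range (n + (∑ i, m i) + 1)).filter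
          (fun c => ∑ i, c i = n + ∑ i, m i),
        C ((n.factorial : ℚ) / (∏ i, ((c i).factorial : ℚ)) *
            Matrix.det (Matrix.of fun i j : Fin k => fallFacQ (c i : ℚ) (m j))) *
          ∏ i, fallFac (X i) (c i) := by
  exact main m hm n
end

section
/- Let m_1 < ... < m_k be distinct nonnegative integers, m = ∑ m_i, n ≥ 0. Then ∏-identity of homogeneous polynomials: det(x_i^{m_j})_{i,j} · (x_1+...+x_k)^n = ∑_{n_1+...+n_k=n+m} (n!/∏ n_i!) · det(c_i^{(m_j)})|_{c=(n_1,...,n_k)} · ∏_i x_i^{n_i}, where det(c_i^{(m_j)}) is the determinant of falling factorials evaluated at the integers n_1,...,n_k. -/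
open MvPolynomial Finset

lemma fallFacQ_nat (c m : ℕ) : fallFacQ (c : ℚ) m = (c.descFactorial m : ℚ) := by
  induction m with
  | zero => simp [fallFacQ]
  | succ m ih =>
    rw [fallFacQ, Finset.prod_range_succ, ← fallFacQ, ih]
    rcases le_or_gt m c with h | h
    · rw [Nat.descFactorial_succ]
      push_cast [h]
      ring
    · rw [Nat.descFactorial_eq_zero_iff_lt.mpr h,
        Nat.descFactorial_eq_zero_iff_lt.mpr (Nat.lt_succ_of_lt h)]
      simp

/-- For `m₁ < ⋯ < m_k` with `m = ∑ mᵢ`, the alternant identity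
`det(xᵢ^{m_j}) · (x₁+⋯+x_k)^n
  = ∑_{n₁+⋯+n_k = n+m} (n!/∏ nᵢ!) · det(nᵢ^{(m_j)}) · ∏ᵢ xᵢ^{nᵢ}`. -/
theorem stmt_12 (k n : ℕ) (hk : 0 < k) (m : Fin k → ℕ) (hm : StrictMono m) :
    Matrix.det (Matrix.of fun i j : Fin k => (X i : MvPolynomial (Fin k) ℚ) ^ m j) *
        (∑ i : Fin k, X i) ^ n =
      ∑ c ∈ (Fintype.piFinset fun _ : Fin k =>
            Finset.range (n + (∑ i, m i) + 1)).filter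
          (fun c => ∑ i, c i = n + ∑ i, m i),
        C ((n.factorial : ℚ) / (∏ i, ((c i).factorial : ℚ)) *
            Matrix.det (Matrix.of fun i j : Fin k => fallFacQ (c i : ℚ) (m j))) *
          ∏ i, (X i : MvPolynomial (Fin k) ℚ) ^ c i := by
  classical
  set M := ∑ i, m i with hM
  set S : Finset (Fin k → ℕ) := (Fintype.piFinset fun _ : Fin k =>
      Finset.range (n + M + 1)).filter (fun c => ∑ i, c i = n + M) with hS
  -- Key lemma: multinomial expansion for a fixed monomial multiplier μ.
  have key : ∀ μ : Fin k → ℕ, (∑ i, μ i = M) →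
      (∏ i, (X i : MvPolynomial (Fin k) ℚ) ^ μ i) * (∑ i, X i) ^ n =
      ∑ c ∈ S,
        C ((n.factorial : ℚ) / (∏ i, ((c i).factorial : ℚ)) *
            ∏ i, fallFacQ (c i : ℚ) (μ i)) * ∏ i, (X i : MvPolynomial (Fin k) ℚ) ^ c i := by
    intro μ hμ
    have hfil : (∑ c ∈ S,
        C ((n.factorial : ℚ) / (∏ i, ((c i).factorial : ℚ)) *
            ∏ i, fallFacQ (c i : ℚ) (μ i)) * ∏ i, (X i : MvPolynomial (Fin k) ℚ) ^ c i)
        = ∑ c ∈ S.filter (fun c => ∀ i, μ i ≤ c i),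
        C ((n.factorial : ℚ) / (∏ i, ((c i).factorial : ℚ)) *
            ∏ i, fallFacQ (c i : ℚ) (μ i)) * ∏ i, (X i : MvPolynomial (Fin k) ℚ) ^ c i := by
      refine (Finset.sum_filter_of_ne ?_).symm
      intro c _ hne
      by_contra hP
      push_neg at hP
      obtain ⟨i, hi⟩ := hP
      apply hne
      have h0 : fallFacQ (c i : ℚ) (μ i) = 0 := by
        rw [fallFacQ_nat, Nat.descFactorial_eq_zero_iff_lt.mpr hi, Nat.cast_zero]
      have h00 : (∏ i, fallFacQ (c i : ℚ) (μ i)) = 0 :=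
        Finset.prod_eq_zero (Finset.mem_univ i) h0
      rw [h00, mul_zero, map_zero, zero_mul]
    rw [hfil, Finset.sum_pow_eq_sum_piAntidiag, Finset.mul_sum]
    refine Finset.sum_nbij' (fun d => fun i => d i + μ i) (fun c => fun i => c i - μ i)
      ?_ ?_ ?_ ?_ ?_
    · intro d hd
      rw [Finset.mem_piAntidiag] at hd
      have hdn : ∀ i, d i ≤ n := fun i =>
        hd.1 ▸ Finset.single_le_sum (f := d) (fun _ _ => Nat.zero_le _) (Finset.mem_univ i)
      have hμM : ∀ i, μ i ≤ M := fun i =>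
        hμ ▸ Finset.single_le_sum (f := μ) (fun _ _ => Nat.zero_le _) (Finset.mem_univ i)
      simp only [S, Finset.mem_filter, Fintype.mem_piFinset, Finset.mem_range]
      refine ⟨⟨fun i => by have := hdn i; have := hμM i; omega, ?_⟩, fun i => Nat.le_add_left _ _⟩
      rw [Finset.sum_add_distrib, hd.1, hμ]
    · intro c hc
      simp only [S, Finset.mem_filter, Fintype.mem_piFinset, Finset.mem_range] at hc
      rw [Finset.mem_piAntidiag]
      refine ⟨?_, fun i _ => Finset.mem_univ i⟩
      have : ∑ i, (c i - μ i + μ i) = n + M := by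
        rw [Finset.sum_congr rfl fun i _ => Nat.sub_add_cancel (hc.2 i)]
        exact hc.1.2
      rw [Finset.sum_add_distrib, hμ] at this
      show (∑ i, (c i - μ i)) = n
      exact Nat.add_right_cancel this
    · intro d _
      funext i
      show d i + μ i - μ i = d i
      omega
    · intro c hc
      simp only [S, Finset.mem_filter, Fintype.mem_piFinset, Finset.mem_range] at hc
      funext i
      show c i - μ i + μ i = c i
      exact Nat.sub_add_cancel (hc.2 i)
    · intro d hd
      rw [Finset.mem_piAntidiag] at hd
      have hdn : ∑ i, d i = n := hd.1
      -- coefficient identity in ℚ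
      have hco : (n.factorial : ℚ) / (∏ i, (((d i + μ i)).factorial : ℚ)) *
          ∏ i, fallFacQ ((d i + μ i : ℕ) : ℚ) (μ i) = (Nat.multinomial Finset.univ d : ℚ) := by
        simp_rw [fallFacQ_nat]
        have h1 : ∀ i : Fin k, (((d i + μ i)).factorial : ℚ)
            = ((d i).factorial : ℚ) * ((d i + μ i).descFactorial (μ i) : ℚ) := by
          intro i
          have := Nat.factorial_mul_descFactorial (Nat.le_add_left (μ i) (d i))
          rw [Nat.add_sub_cancel] at this
          exact_mod_cast this.symm
        rw [Finset.prod_congr rfl fun i _ => h1 i, Finset.prod_mul_distrib]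
        have hfact : (∏ i, ((d i).factorial : ℚ)) ≠ 0 :=
          Finset.prod_ne_zero_iff.mpr fun i _ => Nat.cast_ne_zero.mpr (Nat.factorial_ne_zero _)
        have hdesc : (∏ i, ((d i + μ i).descFactorial (μ i) : ℚ)) ≠ 0 :=
          Finset.prod_ne_zero_iff.mpr fun i _ => Nat.cast_ne_zero.mpr
            fun h0 => by
              have := Nat.descFactorial_eq_zero_iff_lt.mp h0; omega
        have hmult : (Nat.multinomial Finset.univ d : ℚ) * ∏ i, ((d i).factorial : ℚ)
            = (n.factorial : ℚ) := by
          rw [← Nat.cast_prod, ← Nat.cast_mul, mul_comm, Nat.multinomial_spec, hdn]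
        field_simp
        linear_combination (-1 : ℚ) * hmult
      rw [hco]
      have hX : (∏ i, (X i : MvPolynomial (Fin k) ℚ) ^ (d i + μ i))
          = (∏ i, (X i : MvPolynomial (Fin k) ℚ) ^ μ i) * ∏ i, (X i : MvPolynomial (Fin k) ℚ) ^ d i := by
        rw [← Finset.prod_mul_distrib]
        exact Finset.prod_congr rfl fun i _ => by rw [← pow_add, Nat.add_comm]
      rw [hX, map_natCast C]
      ring
  -- Expand both determinants.
  have e1 : (Matrix.of fun i j : Fin k => (X i : MvPolynomial (Fin k) ℚ) ^ m j).det
      = ∑ σ : Equiv.Perm (Fin k),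
          ((Equiv.Perm.sign σ : ℤ) : MvPolynomial (Fin k) ℚ) * ∏ i, X i ^ m (σ i) := by
    rw [← Matrix.det_transpose, Matrix.det_apply']
    rfl
  have e2 : ∀ c : Fin k → ℕ,
      (Matrix.of fun i j : Fin k => fallFacQ (c i : ℚ) (m j)).det
      = ∑ σ : Equiv.Perm (Fin k),
          ((Equiv.Perm.sign σ : ℤ) : ℚ) * ∏ i, fallFacQ (c i : ℚ) (m (σ i)) := by
    intro c
    rw [← Matrix.det_transpose, Matrix.det_apply']
    rfl
  rw [e1, Finset.sum_mul]
  have rhs_eq : ∀ c ∈ S,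
      C ((n.factorial : ℚ) / (∏ i, ((c i).factorial : ℚ)) *
          (Matrix.of fun i j : Fin k => fallFacQ (c i : ℚ) (m j)).det) *
        ∏ i, (X i : MvPolynomial (Fin k) ℚ) ^ c i
      = ∑ σ : Equiv.Perm (Fin k),
          ((Equiv.Perm.sign σ : ℤ) : MvPolynomial (Fin k) ℚ) *
          (C ((n.factorial : ℚ) / (∏ i, ((c i).factorial : ℚ)) *
              ∏ i, fallFacQ (c i : ℚ) (m (σ i))) *
            ∏ i, (X i : MvPolynomial (Fin k) ℚ) ^ c i) := by
    intro c _
    rw [e2 c, Finset.mul_sum, map_sum, Finset.sum_mul]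
    refine Finset.sum_congr rfl fun σ _ => ?_
    rw [show (n.factorial : ℚ) / (∏ i, ((c i).factorial : ℚ)) *
          (((Equiv.Perm.sign σ : ℤ) : ℚ) * ∏ i, fallFacQ (c i : ℚ) (m (σ i)))
        = ((Equiv.Perm.sign σ : ℤ) : ℚ) * ((n.factorial : ℚ) / (∏ i, ((c i).factorial : ℚ)) *
            ∏ i, fallFacQ (c i : ℚ) (m (σ i))) from by ring, map_mul, map_intCast]
    ring
  rw [Finset.sum_congr rfl rhs_eq, Finset.sum_comm]
  refine Finset.sum_congr rfl fun σ _ => ?_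
  rw [mul_assoc, key (fun i => m (σ i)) (Equiv.sum_comp σ m), Finset.mul_sum]
end
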